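/- Multipartite Baranyai theorem: the complete h-uniform n-partite hypergraph K^h_{n×p} (with parts of size p and edges all transversal h-subsets) is r-factorizable if and only if h divides n·p·r and r divides C(n−1, h−1)·p^{h−1}. -/

import Mathlib

open Function

section Cycle
variable {J E : Type*} [Fintype J] [Fintype E]

lemma exists_cycle (bad : J → E → Prop)
    (hne : ∃ j e, bad j e)
    (hrow2 : ∀ j e, bad j e → ∃ e', e' ≠ e ∧ bad j e')
    (hcol2 : ∀ j e, bad j e → ∃ j', j' ≠ j ∧ bad j' e) :
    ∃ (L : ℕ) (_ : 2 ≤ L) (ja : ZMod L → J) (ea : ZMod L → E),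
      Function.Injective ja ∧ Function.Injective ea ∧
      (∀ m, bad (ja m) (ea m)) ∧ (∀ m, bad (ja (m + 1)) (ea m)) := by
  classical
  obtain ⟨j0, e0, h0⟩ := hne
  have step : ∀ q : {q : J × E // bad q.1 q.2},
      ∃ q' : {q : J × E // bad q.1 q.2},
        q'.1.1 ≠ q.1.1 ∧ q'.1.2 ≠ q.1.2 ∧ bad q'.1.1 q.1.2 := by
    rintro ⟨⟨j, e⟩, hq⟩
    obtain ⟨j', hj', hbj⟩ := hcol2 j e hq
    obtain ⟨e', he', hbe⟩ := hrow2 j' e hbj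
    exact ⟨⟨(j', e'), hbe⟩, hj', he', hbj⟩
  choose f hf1 hf2 hf3 using step
  set W : ℕ → {q : J × E // bad q.1 q.2} := fun t => f^[t] ⟨(j0, e0), h0⟩ with hWdef
  have hW : ∀ t, W (t + 1) = f (W t) := fun t => Function.iterate_succ_apply' f t _
  have hWj : ∀ t, (W (t + 1)).1.1 ≠ (W t).1.1 := fun t => by rw [hW]; exact hf1 _
  have hWe : ∀ t, (W (t + 1)).1.2 ≠ (W t).1.2 := fun t => by rw [hW]; exact hf2 _
  have hWb : ∀ t, bad (W (t + 1)).1.1 (W t).1.2 := fun t => by rw [hW]; exact hf3 _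
  set V : ℕ → J ⊕ E := fun T => if T % 2 = 0 then .inl (W (T / 2)).1.1 else .inr (W (T / 2)).1.2
    with hVdef
  have hVeven : ∀ x, V (2 * x) = .inl (W x).1.1 := by
    intro x; simp [hVdef, Nat.mul_div_cancel_left x (by norm_num : 0 < 2), Nat.mul_mod_right]
  have hVodd : ∀ x, V (2 * x + 1) = .inr (W x).1.2 := by
    intro x
    have h1 : (2 * x + 1) % 2 = 1 := by omega
    have h2 : (2 * x + 1) / 2 = x := by omega
    simp [hVdef, h1, h2]
  have hex : ∃ T, ∃ S, S < T ∧ V S = V T := by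
    obtain ⟨x, y, hxy, hVxy⟩ := Finite.exists_ne_map_eq_of_infinite V
    rcases lt_or_gt_of_ne hxy with hlt | hlt
    · exact ⟨y, x, hlt, hVxy⟩
    · exact ⟨x, y, hlt, hVxy.symm⟩
  have hinj : ∀ a b, a < b → b < Nat.find hex → V a ≠ V b := by
    intro a b hab hb hVab
    exact Nat.find_min hex hb ⟨a, hab, hVab⟩
  obtain ⟨S0, hS0lt, hSeq⟩ := Nat.find_spec hex
  set T0 := Nat.find hex with hT0def
  clear_value T0
  clear hT0def hex
  rcases Nat.even_or_odd S0 with hS | hS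
  · -- S0 even; T0 must be even
    obtain ⟨σ, hσ0⟩ := hS
    have hσ : S0 = 2 * σ := by omega
    rcases Nat.even_or_odd T0 with hT | hT
    swap
    · exfalso
      obtain ⟨τ, hτ⟩ := hT
      rw [hσ, hτ, hVeven, hVodd] at hSeq
      exact Sum.inl_ne_inr hSeq
    obtain ⟨τ, hτ0⟩ := hT
    have hτ : T0 = 2 * τ := by omega
    rw [hσ, hτ, hVeven, hVeven] at hSeq
    rw [hσ, hτ] at hS0lt
    have hστ : σ < τ := by omega
    have hjj : (W σ).1.1 = (W τ).1.1 := Sum.inl_injective hSeq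
    set L := τ - σ with hLdef
    have hL : 2 ≤ L := by
      rcases Nat.lt_or_ge L 2 with h | h
      · exfalso
        have : τ = σ + 1 := by omega
        rw [this] at hjj
        exact hWj σ hjj.symm
      · exact h
    haveI : NeZero L := ⟨by omega⟩
    haveI : Fact (1 < L) := ⟨hL⟩
    refine ⟨L, hL, fun m => (W (σ + m.val)).1.1, fun m => (W (σ + m.val)).1.2, ?_, ?_, ?_, ?_⟩
    · intro a b hab
      by_contra hne'
      have hv : a.val ≠ b.val := fun hv => hne' (ZMod.val_injective L hv)
      have ha : a.val < L := ZMod.val_lt a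
      have hb : b.val < L := ZMod.val_lt b
      simp only at hab
      rcases Nat.lt_or_ge a.val b.val with hlt | hge
      · exact hinj (2 * (σ + a.val)) (2 * (σ + b.val)) (by omega) (by omega)
          (by rw [hVeven, hVeven, hab])
      · have hlt : b.val < a.val := by omega
        exact hinj (2 * (σ + b.val)) (2 * (σ + a.val)) (by omega) (by omega)
          (by rw [hVeven, hVeven, hab])
    · intro a b hab
      by_contra hne'
      have hv : a.val ≠ b.val := fun hv => hne' (ZMod.val_injective L hv)
      have ha : a.val < L := ZMod.val_lt a
      have hb : b.val < L := ZMod.val_lt b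
      simp only at hab
      rcases Nat.lt_or_ge a.val b.val with hlt | hge
      · exact hinj (2 * (σ + a.val) + 1) (2 * (σ + b.val) + 1) (by omega) (by omega)
          (by rw [hVodd, hVodd, hab])
      · have hlt : b.val < a.val := by omega
        exact hinj (2 * (σ + b.val) + 1) (2 * (σ + a.val) + 1) (by omega) (by omega)
          (by rw [hVodd, hVodd, hab])
    · intro m; exact (W (σ + m.val)).2
    · intro m
      show bad ((W (σ + (m + 1).val)).1.1) ((W (σ + m.val)).1.2)
      have hv : (m + (1 : ZMod L)).val = (m.val + 1) % L := by
        rw [ZMod.val_add, ZMod.val_one]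
      have hm : m.val < L := ZMod.val_lt m
      rcases Nat.lt_or_ge (m.val + 1) L with hlt | hge
      · have h' : (m + 1).val = m.val + 1 := by rw [hv, Nat.mod_eq_of_lt hlt]
        rw [h', show σ + (m.val + 1) = (σ + m.val) + 1 by ring]
        exact hWb (σ + m.val)
      · have hvL : m.val + 1 = L := by omega
        have h' : (m + 1).val = 0 := by rw [hv, hvL, Nat.mod_self]
        rw [h']
        simp only [Nat.add_zero]
        have hτeq : τ = σ + m.val + 1 := by omega
        rw [hjj, hτeq]
        exact hWb (σ + m.val)
  · -- S0 odd; T0 must be odd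
    obtain ⟨σ, hσ⟩ := hS
    rcases Nat.even_or_odd T0 with hT | hT
    · exfalso
      obtain ⟨τ, hτ0⟩ := hT
      have hτ : T0 = 2 * τ := by omega
      rw [hσ, hτ, hVodd, hVeven] at hSeq
      exact Sum.inr_ne_inl hSeq
    obtain ⟨τ, hτ⟩ := hT
    rw [hσ, hτ, hVodd, hVodd] at hSeq
    rw [hσ, hτ] at hS0lt
    have hστ : σ < τ := by omega
    have hee : (W σ).1.2 = (W τ).1.2 := Sum.inr_injective hSeq
    set L := τ - σ with hLdef
    have hL : 2 ≤ L := by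
      rcases Nat.lt_or_ge L 2 with h | h
      · exfalso
        have : τ = σ + 1 := by omega
        rw [this] at hee
        exact hWe σ hee.symm
      · exact h
    haveI : NeZero L := ⟨by omega⟩
    haveI : Fact (1 < L) := ⟨hL⟩
    have hja_inj : Function.Injective (fun m : ZMod L => (W (σ + m.val + 1)).1.1) := by
      intro a b hab
      by_contra hne'
      have hv : a.val ≠ b.val := fun hv => hne' (ZMod.val_injective L hv)
      have ha : a.val < L := ZMod.val_lt a
      have hb : b.val < L := ZMod.val_lt b
      simp only at hab
      rcases Nat.lt_or_ge a.val b.val with hlt | hge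
      · exact hinj (2 * (σ + a.val + 1)) (2 * (σ + b.val + 1)) (by omega) (by omega)
          (by rw [hVeven, hVeven, hab])
      · have hlt : b.val < a.val := by omega
        exact hinj (2 * (σ + b.val + 1)) (2 * (σ + a.val + 1)) (by omega) (by omega)
          (by rw [hVeven, hVeven, hab])
    have hea0_inj : Function.Injective (fun m : ZMod L => (W (σ + m.val)).1.2) := by
      intro a b hab
      by_contra hne'
      have hv : a.val ≠ b.val := fun hv => hne' (ZMod.val_injective L hv)
      have ha : a.val < L := ZMod.val_lt a
      have hb : b.val < L := ZMod.val_lt b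
      simp only at hab
      rcases Nat.lt_or_ge a.val b.val with hlt | hge
      · exact hinj (2 * (σ + a.val) + 1) (2 * (σ + b.val) + 1) (by omega) (by omega)
          (by rw [hVodd, hVodd, hab])
      · have hlt : b.val < a.val := by omega
        exact hinj (2 * (σ + b.val) + 1) (2 * (σ + a.val) + 1) (by omega) (by omega)
          (by rw [hVodd, hVodd, hab])
    have hB2 : ∀ m : ZMod L, bad ((W (σ + m.val + 1)).1.1) ((W (σ + (m+1).val)).1.2) := by
      intro m
      have hv : (m + (1 : ZMod L)).val = (m.val + 1) % L := by
        rw [ZMod.val_add, ZMod.val_one]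
      have hm : m.val < L := ZMod.val_lt m
      rcases Nat.lt_or_ge (m.val + 1) L with hlt | hge
      · have h' : (m + 1).val = m.val + 1 := by rw [hv, Nat.mod_eq_of_lt hlt]
        rw [h', show σ + (m.val + 1) = σ + m.val + 1 by ring]
        exact (W (σ + m.val + 1)).2
      · have hvL : m.val + 1 = L := by omega
        have h' : (m + 1).val = 0 := by rw [hv, hvL, Nat.mod_self]
        rw [h']
        simp only [Nat.add_zero]
        rw [hee]
        have hτeq : τ = σ + m.val + 1 := by omega
        rw [hτeq]
        exact (W (σ + m.val + 1)).2
    refine ⟨L, hL, fun m => (W (σ + m.val + 1)).1.1,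
      fun m => (W (σ + (m + 1).val)).1.2, hja_inj, ?_, ?_, ?_⟩
    · intro a b hab
      have h2 : (fun m : ZMod L => (W (σ + m.val)).1.2) (a + 1)
          = (fun m : ZMod L => (W (σ + m.val)).1.2) (b + 1) := hab
      exact add_right_cancel (hea0_inj h2)
    · intro m; exact hB2 m
    · intro m; exact hWb (σ + (m + 1).val)

end Cycle

section Round
variable {J E : Type*} [Fintype J] [Fintype E] [DecidableEq J] [DecidableEq E]

/-- upper bound: smallest multiple of `D` that is `≥ v`, i.e. ceiling. -/
def hib (D v : ℕ) : ℕ := if D ∣ v then v else D * (v / D) + D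

lemma lob_dvd (D v : ℕ) : D ∣ D * (v / D) := Dvd.intro _ rfl

lemma hib_dvd {D v : ℕ} (h : ¬ D ∣ v) : D ∣ hib D v := by
  rw [hib, if_neg h]; exact Dvd.dvd.add (Dvd.intro _ rfl) dvd_rfl

lemma hib_eq_of_dvd {D v : ℕ} (h : D ∣ v) : hib D v = v := if_pos h

lemma lob_le (D v : ℕ) : D * (v / D) ≤ v := Nat.mul_div_le v D

lemma le_hib (D v : ℕ) (hD : 0 < D) : v ≤ hib D v := by
  rw [hib]
  split
  · exact le_rfl
  · have h1 := Nat.div_add_mod v D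
    have h2 := Nat.mod_lt v hD
    omega

lemma push_step (D : ℕ) (hD : 0 < D) (N Y : J → E → ℕ)
    (hlo : ∀ j e, D * (N j e / D) ≤ Y j e) (hhi : ∀ j e, Y j e ≤ hib D (N j e))
    (hbad : ∃ j e, ¬ D ∣ Y j e)
    (hrowd : ∀ j, D ∣ ∑ e, Y j e) (hcold : ∀ e, D ∣ ∑ j, Y j e) :
    ∃ Y' : J → E → ℕ,
      (∀ j e, D * (N j e / D) ≤ Y' j e) ∧ (∀ j e, Y' j e ≤ hib D (N j e)) ∧
      (∀ j, ∑ e, Y' j e = ∑ e, Y j e) ∧ (∀ e, ∑ j, Y' j e = ∑ j, Y j e) ∧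
      (Finset.univ.filter fun q : J × E => ¬ D ∣ Y' q.1 q.2) ⊂
        (Finset.univ.filter fun q : J × E => ¬ D ∣ Y q.1 q.2) := by
  classical
  set bad : J → E → Prop := fun j e => ¬ D ∣ Y j e with hbaddef
  have hbadN : ∀ j e, bad j e → ¬ D ∣ N j e := by
    intro j e hb hdvd
    have h1 : D * (N j e / D) = N j e := Nat.mul_div_cancel' hdvd
    have h2 : hib D (N j e) = N j e := hib_eq_of_dvd hdvd
    have := hlo j e; have := hhi j e
    have : Y j e = N j e := by omega
    exact hb (this ▸ hdvd)
  have hrow2 : ∀ j e, bad j e → ∃ e', e' ≠ e ∧ bad j e' := by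
    intro j e hb
    by_contra hno
    push_neg at hno
    apply hb
    have hsum : ∑ e', Y j e' = Y j e + ∑ e' ∈ Finset.univ.erase e, Y j e' :=
      (Finset.add_sum_erase _ _ (Finset.mem_univ e)).symm
    have herase : D ∣ ∑ e' ∈ Finset.univ.erase e, Y j e' := by
      apply Finset.dvd_sum
      intro e' he'
      have : e' ≠ e := Finset.ne_of_mem_erase he'
      have := hno e' this
      simpa [hbaddef] using this
    have h3 : Y j e = ∑ e', Y j e' - ∑ e' ∈ Finset.univ.erase e, Y j e' := by omega
    rw [h3]
    exact Nat.dvd_sub (hrowd j) herase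
  have hcol2 : ∀ j e, bad j e → ∃ j', j' ≠ j ∧ bad j' e := by
    intro j e hb
    by_contra hno
    push_neg at hno
    apply hb
    have hsum : ∑ j', Y j' e = Y j e + ∑ j' ∈ Finset.univ.erase j, Y j' e :=
      (Finset.add_sum_erase _ _ (Finset.mem_univ j)).symm
    have herase : D ∣ ∑ j' ∈ Finset.univ.erase j, Y j' e := by
      apply Finset.dvd_sum
      intro j' hj'
      have : j' ≠ j := Finset.ne_of_mem_erase hj'
      have := hno j' this
      simpa [hbaddef] using this
    have h3 : Y j e = ∑ j', Y j' e - ∑ j' ∈ Finset.univ.erase j, Y j' e := by omega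
    rw [h3]
    exact Nat.dvd_sub (hcold e) herase
  obtain ⟨L, hL, ja, ea, hjainj, heainj, h1, h2⟩ := exists_cycle bad hbad hrow2 hcol2
  haveI : NeZero L := ⟨by omega⟩
  haveI : Fact (1 < L) := ⟨hL⟩
  haveI : Nonempty (ZMod L) := ⟨0⟩
  set P : J → E → Prop := fun j e => ∃ m, ja m = j ∧ ea m = e with hPdef
  set Mi : J → E → Prop := fun j e => ∃ m, ja (m + 1) = j ∧ ea m = e with hMidef
  have hPM : ∀ j e, P j e → Mi j e → False := by
    rintro j e ⟨m, hm1, hm2⟩ ⟨m', hm1', hm2'⟩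
    have hmm : m = m' := heainj (hm2.trans hm2'.symm)
    subst hmm
    have : m = m + 1 := hjainj (hm1.trans hm1'.symm)
    have h10 : (1 : ZMod L) = 0 := by
      have := left_eq_add.mp this
      exact this
    exact one_ne_zero h10
  have hne : Finset.univ.Nonempty (α := ZMod L) := Finset.univ_nonempty
  set room : ZMod L → ℕ := fun m =>
    min (hib D (N (ja m) (ea m)) - Y (ja m) (ea m))
        (Y (ja (m + 1)) (ea m) - D * (N (ja (m + 1)) (ea m) / D)) with hroomdef
  set ε := Finset.univ.inf' hne room with hεdef
  have hroomp : ∀ m, ε ≤ hib D (N (ja m) (ea m)) - Y (ja m) (ea m) :=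
    fun m => le_trans (Finset.inf'_le room (Finset.mem_univ m)) (min_le_left _ _)
  have hroomm : ∀ m, ε ≤ Y (ja (m + 1)) (ea m) - D * (N (ja (m + 1)) (ea m) / D) :=
    fun m => le_trans (Finset.inf'_le room (Finset.mem_univ m)) (min_le_right _ _)
  have hε1 : 1 ≤ ε := by
    rw [hεdef]
    apply Finset.le_inf'
    intro m _
    have hb1 := h1 m
    have hb2 := h2 m
    have hY1 := hhi (ja m) (ea m)
    have hY2 := hlo (ja (m + 1)) (ea m)
    have hd1 : D ∣ hib D (N (ja m) (ea m)) := hib_dvd (hbadN _ _ hb1)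
    have hd2 : D ∣ D * (N (ja (m + 1)) (ea m) / D) := lob_dvd _ _
    have hne1 : Y (ja m) (ea m) ≠ hib D (N (ja m) (ea m)) := fun hEq => hb1 (hEq ▸ hd1)
    have hne2 : Y (ja (m + 1)) (ea m) ≠ D * (N (ja (m + 1)) (ea m) / D) :=
      fun hEq => hb2 (hEq ▸ hd2)
    have := hlo (ja (m+1)) (ea m)
    simp only [hroomdef, le_min_iff]
    omega
  set Y' : J → E → ℕ := fun j e =>
    if P j e then Y j e + ε else if Mi j e then Y j e - ε else Y j e with hY'def
  have hεY : ∀ j e, Mi j e → ε ≤ Y j e - D * (N j e / D) := by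
    rintro j e ⟨m, hm1, hm2⟩
    subst hm1; subst hm2
    exact hroomm m
  -- pointwise facts
  have hY'P : ∀ j e, P j e → Y' j e = Y j e + ε := by
    intro j e hP; simp [hY'def, hP]
  have hY'M : ∀ j e, Mi j e → Y' j e = Y j e - ε := by
    intro j e hM
    have hnP : ¬ P j e := fun hP => hPM j e hP hM
    simp [hY'def, hnP, hM]
  have hY'O : ∀ j e, ¬ P j e → ¬ Mi j e → Y' j e = Y j e := by
    intro j e h1' h2'; simp [hY'def, h1', h2']
  refine ⟨Y', ?_, ?_, ?_, ?_, ?_⟩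
  · intro j e
    by_cases hP : P j e
    · rw [hY'P j e hP]; exact le_trans (hlo j e) (Nat.le_add_right _ _)
    by_cases hM : Mi j e
    · rw [hY'M j e hM]
      have := hεY j e hM
      have := hlo j e
      omega
    · rw [hY'O j e hP hM]; exact hlo j e
  · intro j e
    by_cases hP : P j e
    · rw [hY'P j e hP]
      obtain ⟨m, hm1, hm2⟩ := hP
      subst hm1; subst hm2
      have := hroomp m
      have := hhi (ja m) (ea m)
      omega
    by_cases hM : Mi j e
    · rw [hY'M j e hM]
      exact le_trans (Nat.sub_le _ _) (hhi j e)
    · rw [hY'O j e hP hM]; exact hhi j e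
  · -- row sums
    intro j
    have key : (∑ e, (Y' j e : ℤ)) = ∑ e, (Y j e : ℤ) := by
      have hpt : ∀ e, (Y' j e : ℤ) =
          (Y j e : ℤ) + (if P j e then (ε : ℤ) else 0) - (if Mi j e then (ε : ℤ) else 0) := by
        intro e
        by_cases hP : P j e
        · rw [hY'P j e hP, if_pos hP, if_neg (fun hM => hPM j e hP hM)]
          push_cast; ring
        by_cases hM : Mi j e
        · rw [hY'M j e hM, if_neg hP, if_pos hM]
          have h1' := hεY j e hM
          have h2' : ε ≤ Y j e := le_trans h1' (Nat.sub_le _ _)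
          push_cast [h2']
          ring
        · rw [hY'O j e hP hM, if_neg hP, if_neg hM]; ring
      rw [Finset.sum_congr rfl (fun e _ => hpt e)]
      rw [Finset.sum_sub_distrib, Finset.sum_add_distrib]
      have hcard : (Finset.univ.filter fun e => P j e).card
          = (Finset.univ.filter fun e => Mi j e).card := by
        have e1 : (Finset.univ.filter fun e => P j e)
            = (Finset.univ.filter fun m => ja m = j).image ea := by
          ext e
          simp only [Finset.mem_filter, Finset.mem_univ, true_and, Finset.mem_image, hPdef]
        have e2 : (Finset.univ.filter fun e => Mi j e)
            = (Finset.univ.filter fun m => ja (m + 1) = j).image ea := by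
          ext e
          simp only [Finset.mem_filter, Finset.mem_univ, true_and, Finset.mem_image, hMidef]
        rw [e1, e2, Finset.card_image_of_injective _ heainj,
          Finset.card_image_of_injective _ heainj]
        apply Finset.card_nbij' (fun m => m - 1) (fun m => m + 1)
        · intro a ha
          simp only [Finset.mem_coe, Finset.mem_filter, Finset.mem_univ, true_and] at ha ⊢
          rw [sub_add_cancel]; exact ha
        · intro a ha
          simp only [Finset.mem_coe, Finset.mem_filter, Finset.mem_univ, true_and] at ha ⊢
          exact ha
        · intro a _; exact sub_add_cancel a 1
        · intro a _; exact add_sub_cancel_right a 1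
      rw [← Finset.sum_filter, ← Finset.sum_filter]
      simp only [Finset.sum_const, nsmul_eq_mul]
      rw [hcard]
      ring
    exact_mod_cast key
  · -- col sums
    intro e
    have key : (∑ j, (Y' j e : ℤ)) = ∑ j, (Y j e : ℤ) := by
      have hpt : ∀ j, (Y' j e : ℤ) =
          (Y j e : ℤ) + (if P j e then (ε : ℤ) else 0) - (if Mi j e then (ε : ℤ) else 0) := by
        intro j
        by_cases hP : P j e
        · rw [hY'P j e hP, if_pos hP, if_neg (fun hM => hPM j e hP hM)]
          push_cast; ring
        by_cases hM : Mi j e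
        · rw [hY'M j e hM, if_neg hP, if_pos hM]
          have h1' := hεY j e hM
          have h2' : ε ≤ Y j e := le_trans h1' (Nat.sub_le _ _)
          push_cast [h2']
          ring
        · rw [hY'O j e hP hM, if_neg hP, if_neg hM]; ring
      rw [Finset.sum_congr rfl (fun j _ => hpt j)]
      rw [Finset.sum_sub_distrib, Finset.sum_add_distrib]
      have hcard : (Finset.univ.filter fun j => P j e).card
          = (Finset.univ.filter fun j => Mi j e).card := by
        have e1 : (Finset.univ.filter fun j => P j e)
            = (Finset.univ.filter fun m => ea m = e).image ja := by
          ext j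
          simp only [Finset.mem_filter, Finset.mem_univ, true_and, Finset.mem_image, hPdef]
          constructor
          · rintro ⟨m, hm1, hm2⟩; exact ⟨m, hm2, hm1⟩
          · rintro ⟨m, hm1, hm2⟩; exact ⟨m, hm2, hm1⟩
        have e2 : (Finset.univ.filter fun j => Mi j e)
            = (Finset.univ.filter fun m => ea m = e).image (fun m => ja (m + 1)) := by
          ext j
          simp only [Finset.mem_filter, Finset.mem_univ, true_and, Finset.mem_image, hMidef]
          constructor
          · rintro ⟨m, hm1, hm2⟩; exact ⟨m, hm2, hm1⟩
          · rintro ⟨m, hm1, hm2⟩; exact ⟨m, hm2, hm1⟩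
        have hja2 : Function.Injective (fun m : ZMod L => ja (m + 1)) := by
          intro a b hab
          have := hjainj hab
          exact add_right_cancel this
        rw [e1, e2, Finset.card_image_of_injective _ hjainj,
          Finset.card_image_of_injective _ hja2]
      rw [← Finset.sum_filter, ← Finset.sum_filter]
      simp only [Finset.sum_const, nsmul_eq_mul]
      rw [hcard]
      ring
    exact_mod_cast key
  · -- strict subset
    constructor
    · intro q hq
      simp only [Finset.mem_filter, Finset.mem_univ, true_and] at hq ⊢
      obtain ⟨j, e⟩ := q
      by_cases hP : P j e
      · obtain ⟨m, hm1, hm2⟩ := hP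
        subst hm1; subst hm2
        exact h1 m
      by_cases hM : Mi j e
      · obtain ⟨m, hm1, hm2⟩ := hM
        subst hm1; subst hm2
        exact h2 m
      · rw [hY'O j e hP hM] at hq
        exact hq
    · rw [Finset.not_subset]
      obtain ⟨m0, _, hm0⟩ := Finset.exists_mem_eq_inf' hne room
      rcases min_cases (hib D (N (ja m0) (ea m0)) - Y (ja m0) (ea m0))
        (Y (ja (m0 + 1)) (ea m0) - D * (N (ja (m0 + 1)) (ea m0) / D)) with
        ⟨hmin, _⟩ | ⟨hmin, _⟩
      · refine ⟨(ja m0, ea m0), ?_, ?_⟩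
        · simp only [Finset.mem_filter, Finset.mem_univ, true_and]
          exact h1 m0
        · simp only [Finset.mem_filter, Finset.mem_univ, true_and, not_not]
          have hP : P (ja m0) (ea m0) := ⟨m0, rfl, rfl⟩
          rw [hY'P _ _ hP]
          have hεeq : ε = hib D (N (ja m0) (ea m0)) - Y (ja m0) (ea m0) := by
            rw [hεdef, hm0]; exact hmin
          have hYle := hhi (ja m0) (ea m0)
          have : Y (ja m0) (ea m0) + ε = hib D (N (ja m0) (ea m0)) := by omega
          rw [this]
          exact hib_dvd (hbadN _ _ (h1 m0))
      · refine ⟨(ja (m0 + 1), ea m0), ?_, ?_⟩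
        · simp only [Finset.mem_filter, Finset.mem_univ, true_and]
          exact h2 m0
        · simp only [Finset.mem_filter, Finset.mem_univ, true_and, not_not]
          have hM : Mi (ja (m0 + 1)) (ea m0) := ⟨m0, rfl, rfl⟩
          rw [hY'M _ _ hM]
          have hεeq : ε = Y (ja (m0 + 1)) (ea m0) - D * (N (ja (m0 + 1)) (ea m0) / D) := by
            rw [hεdef, hm0]; exact hmin
          have hYge := hlo (ja (m0 + 1)) (ea m0)
          have : Y (ja (m0 + 1)) (ea m0) - ε = D * (N (ja (m0 + 1)) (ea m0) / D) := by omega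
          rw [this]
          exact lob_dvd _ _

end Round

section Round2
variable {J E : Type*} [Fintype J] [Fintype E] [DecidableEq J] [DecidableEq E]

lemma exists_divisible (D : ℕ) (hD : 0 < D) (N : J → E → ℕ)
    (hrowd : ∀ j, D ∣ ∑ e, N j e) (hcold : ∀ e, D ∣ ∑ j, N j e) :
    ∃ Y : J → E → ℕ,
      (∀ j e, D * (N j e / D) ≤ Y j e) ∧ (∀ j e, Y j e ≤ hib D (N j e)) ∧
      (∀ j, ∑ e, Y j e = ∑ e, N j e) ∧ (∀ e, ∑ j, Y j e = ∑ j, N j e) ∧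
      (∀ j e, D ∣ Y j e) := by
  classical
  suffices H : ∀ B : ℕ, ∀ Y : J → E → ℕ,
      (Finset.univ.filter fun q : J × E => ¬ D ∣ Y q.1 q.2).card = B →
      (∀ j e, D * (N j e / D) ≤ Y j e) → (∀ j e, Y j e ≤ hib D (N j e)) →
      (∀ j, ∑ e, Y j e = ∑ e, N j e) → (∀ e, ∑ j, Y j e = ∑ j, N j e) →
      ∃ Y' : J → E → ℕ,
        (∀ j e, D * (N j e / D) ≤ Y' j e) ∧ (∀ j e, Y' j e ≤ hib D (N j e)) ∧
        (∀ j, ∑ e, Y' j e = ∑ e, N j e) ∧ (∀ e, ∑ j, Y' j e = ∑ j, N j e) ∧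
        (∀ j e, D ∣ Y' j e) by
    exact H _ N rfl (fun j e => Nat.mul_div_le _ _) (fun j e => le_hib D _ hD)
      (fun _ => rfl) (fun _ => rfl)
  intro B
  induction B using Nat.strong_induction_on with
  | _ B ih =>
    intro Y hB hlo hhi hrow hcol
    by_cases hbad : ∃ j e, ¬ D ∣ Y j e
    · obtain ⟨Y', hlo', hhi', hrow', hcol', hss⟩ :=
        push_step D hD N Y hlo hhi hbad
          (fun j => hrow j ▸ hrowd j) (fun e => hcol e ▸ hcold e)
      have hlt : (Finset.univ.filter fun q : J × E => ¬ D ∣ Y' q.1 q.2).card < B :=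
        hB ▸ Finset.card_lt_card hss
      exact ih _ hlt Y' rfl hlo' hhi'
        (fun j => (hrow' j).trans (hrow j)) (fun e => (hcol' e).trans (hcol e))
    · push_neg at hbad
      exact ⟨Y, hlo, hhi, hrow, hcol, hbad⟩

/-- Key rounding lemma: divide an integer matrix with `D`-divisible row and column
sums into `D`-th parts. -/
lemma nat_round (D : ℕ) (hD : 0 < D) (N : J → E → ℕ)
    (hrowd : ∀ j, D ∣ ∑ e, N j e) (hcold : ∀ e, D ∣ ∑ j, N j e) :
    ∃ y : J → E → ℕ,
      (∀ j, D * ∑ e, y j e = ∑ e, N j e) ∧ (∀ e, D * ∑ j, y j e = ∑ j, N j e) ∧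
      (∀ j e, D * (N j e / D) ≤ D * y j e) ∧ (∀ j e, D * y j e ≤ hib D (N j e)) := by
  obtain ⟨Y, hlo, hhi, hrow, hcol, hdvd⟩ := exists_divisible D hD N hrowd hcold
  refine ⟨fun j e => Y j e / D, ?_, ?_, ?_, ?_⟩
  · intro j
    rw [Finset.mul_sum]
    rw [← hrow j]
    apply Finset.sum_congr rfl
    intro e _
    exact Nat.mul_div_cancel' (hdvd j e)
  · intro e
    rw [Finset.mul_sum]
    rw [← hcol e]
    apply Finset.sum_congr rfl
    intro j _
    exact Nat.mul_div_cancel' (hdvd j e)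
  · intro j e
    rw [Nat.mul_div_cancel' (hdvd j e)]
    exact hlo j e
  · intro j e
    rw [Nat.mul_div_cancel' (hdvd j e)]
    exact hhi j e

lemma hib_le_of_le {D v c : ℕ} (hD : 0 < D) (h : v ≤ D * c) : hib D v ≤ D * c := by
  rw [hib]
  split
  · exact h
  · rename_i hnd
    have hlt : v < D * c := lt_of_le_of_ne h (fun hEq => hnd (hEq ▸ Dvd.intro c rfl))
    have : v / D < c := by
      rw [Nat.div_lt_iff_lt_mul hD, mul_comm]
      exact hlt
    have : v / D + 1 ≤ c := this
    calc D * (v / D) + D = D * (v / D + 1) := by ring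
    _ ≤ D * c := Nat.mul_le_mul_left D this

/-- Usable corollary: exact row/column sums with capacities. -/
lemma round_with_caps (D : ℕ) (hD : 0 < D) (N : J → E → ℕ) (cap : J → E → ℕ)
    (R : J → ℕ) (C : E → ℕ)
    (hrow : ∀ j, ∑ e, N j e = D * R j) (hcol : ∀ e, ∑ j, N j e = D * C e)
    (hcap : ∀ j e, N j e ≤ D * cap j e) :
    ∃ y : J → E → ℕ,
      (∀ j, ∑ e, y j e = R j) ∧ (∀ e, ∑ j, y j e = C e) ∧ (∀ j e, y j e ≤ cap j e) := by
  obtain ⟨y, h1, h2, _, h4⟩ := nat_round D hD N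
    (fun j => (hrow j) ▸ Dvd.intro (R j) rfl) (fun e => (hcol e) ▸ Dvd.intro (C e) rfl)
  refine ⟨y, ?_, ?_, ?_⟩
  · intro j
    have := h1 j
    rw [hrow j] at this
    exact Nat.eq_of_mul_eq_mul_left hD this
  · intro e
    have := h2 e
    rw [hcol e] at this
    exact Nat.eq_of_mul_eq_mul_left hD this
  · intro j e
    have := (h4 j e).trans (hib_le_of_le hD (hcap j e))
    exact Nat.le_of_mul_le_mul_left this hD

/-- Split a bipartite multigraph with degrees `p * R j`, `p * C e` into `p` pieces with
degrees exactly `R j`, `C e`. -/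
lemma split_p (p : ℕ) (g : J → E → ℕ) (R : J → ℕ) (C : E → ℕ)
    (hrow : ∀ j, ∑ e, g j e = p * R j) (hcol : ∀ e, ∑ j, g j e = p * C e) :
    ∃ u : Fin p → J → E → ℕ,
      (∀ j e, ∑ b, u b j e = g j e) ∧
      (∀ b j, ∑ e, u b j e = R j) ∧ (∀ b e, ∑ j, u b j e = C e) := by
  induction p generalizing g with
  | zero =>
    refine ⟨fun b => b.elim0, fun j e => ?_, fun b => b.elim0, fun b => b.elim0⟩
    have hg : g j e = 0 := by
      have := hrow j
      rw [Nat.zero_mul] at this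
      exact Finset.sum_eq_zero_iff.mp this e (Finset.mem_univ e)
    simp [hg]
  | succ q ih =>
    obtain ⟨y, hy1, hy2, hy3⟩ := round_with_caps (q + 1) (Nat.succ_pos q) g g R C
      (fun j => hrow j) (fun e => hcol e)
      (fun j e => Nat.le_mul_of_pos_left _ (Nat.succ_pos q))
    set g' : J → E → ℕ := fun j e => g j e - y j e with hg'def
    have hrow' : ∀ j, ∑ e, g' j e = q * R j := by
      intro j
      rw [hg'def]
      rw [Finset.sum_tsub_distrib _ (fun e _ => hy3 j e), hrow j, hy1 j]
      ring_nf
      omega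
    have hcol' : ∀ e, ∑ j, g' j e = q * C e := by
      intro e
      rw [hg'def]
      rw [Finset.sum_tsub_distrib _ (fun j _ => hy3 j e), hcol e, hy2 e]
      ring_nf
      omega
    obtain ⟨u', hu1, hu2, hu3⟩ := ih g' hrow' hcol'
    refine ⟨Fin.cons y u', ?_, ?_, ?_⟩
    · intro j e
      rw [Fin.sum_univ_succ]
      simp only [Fin.cons_zero, Fin.cons_succ]
      rw [hu1 j e]
      have hgg : g' j e = g j e - y j e := rfl
      have := hy3 j e
      omega
    · intro b j
      refine Fin.cases ?_ ?_ b
      · simp only [Fin.cons_zero]; exact hy1 j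
      · intro i; simp only [Fin.cons_succ]; exact hu2 i j
    · intro b e
      refine Fin.cases ?_ ?_ b
      · simp only [Fin.cons_zero]; exact hy2 e
      · intro i; simp only [Fin.cons_succ]; exact hu3 i e

end Round2

section Baranyai

/-- transversal predicate -/
def tvP {n p : ℕ} (e : Finset (Fin n × Fin p)) : Prop :=
  ∀ a : Fin n, (e.filter (fun x => x.1 = a)).card ≤ 1

/-- partial edges valid at stage `i` -/
def validP {n p : ℕ} (h i : ℕ) (e : Finset (Fin n × Fin p)) : Prop :=
  tvP e ∧ e.card ≤ h ∧ ∀ x ∈ e, (x.1 : ℕ) < i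

instance {n p : ℕ} (e : Finset (Fin n × Fin p)) : Decidable (tvP e) := by
  unfold tvP; infer_instance

instance {n p : ℕ} (h i : ℕ) (e : Finset (Fin n × Fin p)) : Decidable (validP h i e) := by
  unfold validP; infer_instance

/-- multiplicity of a partial edge at stage `i` -/
def mws (n h p i : ℕ) {n' p' : ℕ} (e : Finset (Fin n' × Fin p')) : ℕ :=
  (n - i).choose (h - e.card) * p ^ (h - e.card)

def Mw (n h p i : ℕ) (e : Finset (Fin n × Fin p)) : ℕ :=
  if validP h i e then mws n h p i e else 0

lemma card_filter_fin_lt (n i : ℕ) (hi : i ≤ n) :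
    ((Finset.univ : Finset (Fin n)).filter fun a => a.val < i).card = i := by
  induction i with
  | zero => simp
  | succ m ihm =>
    have hm : m ≤ n := by omega
    have : (Finset.univ : Finset (Fin n)).filter (fun a => a.val < m + 1)
        = insert ⟨m, by omega⟩ ((Finset.univ : Finset (Fin n)).filter fun a => a.val < m) := by
      ext a
      simp only [Finset.mem_filter, Finset.mem_univ, true_and, Finset.mem_insert]
      constructor
      · intro ha
        rcases Nat.lt_or_ge a.val m with h | h
        · exact Or.inr h
        · left; apply Fin.ext; simp; omega
      · rintro (rfl | ha)
        · simp
        · omega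
    rw [this, Finset.card_insert_of_notMem (by simp), ihm hm]

lemma card_filter_part_lt (n p i : ℕ) (hi : i ≤ n) :
    ((Finset.univ : Finset (Fin n × Fin p)).filter fun v => v.1.val < i).card = i * p := by
  have hsplit : ((Finset.univ : Finset (Fin n × Fin p)).filter fun v => v.1.val < i)
      = ((Finset.univ : Finset (Fin n)).filter fun a => a.val < i) ×ˢ
        (Finset.univ : Finset (Fin p)) := by
    ext ⟨a, b⟩
    simp [Finset.mem_product]
  rw [hsplit, Finset.card_product, card_filter_fin_lt n i hi, Finset.card_univ,
    Fintype.card_fin]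

/-- the insert/erase bijection for sums over edges whose part-`a` slice is `{(a,b)}` -/
lemma sum_slice_insert {n p : ℕ} (a : Fin n) (b : Fin p)
    (g : Finset (Fin n × Fin p) → ℕ) :
    ∑ e' ∈ Finset.univ.filter
        (fun e' : Finset (Fin n × Fin p) => e'.filter (fun x => x.1 = a) = {(a, b)}), g e'
    = ∑ e ∈ Finset.univ.filter
        (fun e : Finset (Fin n × Fin p) => e.filter (fun x => x.1 = a) = ∅),
        g (insert (a, b) e) := by
  classical
  apply Finset.sum_nbij' (fun e' => e'.erase (a, b)) (fun e => insert (a, b) e)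
  · intro e' he'
    simp only [Finset.mem_filter, Finset.mem_univ, true_and] at he' ⊢
    rw [Finset.filter_erase, he']
    simp
  · intro e he
    simp only [Finset.mem_filter, Finset.mem_univ, true_and] at he ⊢
    rw [Finset.filter_insert, if_pos rfl, he]
    rfl
  · intro e' he'
    simp only [Finset.mem_filter, Finset.mem_univ, true_and] at he'
    apply Finset.insert_erase
    have : (a, b) ∈ e'.filter (fun x => x.1 = a) := by rw [he']; simp
    exact (Finset.mem_filter.mp this).1
  · intro e he
    simp only [Finset.mem_filter, Finset.mem_univ, true_and] at he
    apply Finset.erase_insert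
    intro hmem
    have : (a, b) ∈ e.filter (fun x => x.1 = a) := Finset.mem_filter.mpr ⟨hmem, rfl⟩
    rw [he] at this
    simp at this
  · intro e' he'
    simp only [Finset.mem_filter, Finset.mem_univ, true_and] at he'
    congr 1
    symm
    apply Finset.insert_erase
    have : (a, b) ∈ e'.filter (fun x => x.1 = a) := by rw [he']; simp
    exact (Finset.mem_filter.mp this).1

lemma card_as_sum {n p : ℕ} (e : Finset (Fin n × Fin p)) :
    e.card = ∑ v : Fin n × Fin p, (if v ∈ e then 1 else 0) := by
  rw [Finset.sum_ite_mem, Finset.univ_inter, Finset.sum_const, smul_eq_mul, mul_one]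

end Baranyai

section MainStep
variable {n h p : ℕ}

lemma slice_cases (ai : Fin n) (e' : Finset (Fin n × Fin p)) :
    e'.filter (fun x => x.1 = ai) = ∅ ∨ (∃ b, e'.filter (fun x => x.1 = ai) = {(ai, b)}) ∨
    (e'.filter (fun x => x.1 = ai) ≠ ∅ ∧ (∀ b, e'.filter (fun x => x.1 = ai) ≠ {(ai, b)}) ∧
      ¬ tvP e') := by
  classical
  by_cases h0 : e'.filter (fun x => x.1 = ai) = ∅
  · exact Or.inl h0
  by_cases h1 : ∃ b, e'.filter (fun x => x.1 = ai) = {(ai, b)}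
  · exact Or.inr (Or.inl h1)
  · refine Or.inr (Or.inr ⟨h0, fun b hb => h1 ⟨b, hb⟩, fun htv => ?_⟩)
    have hcard := htv ai
    interval_cases hc : (e'.filter (fun x => x.1 = ai)).card
    · exact h0 (Finset.card_eq_zero.mp hc)
    · obtain ⟨x, hx⟩ := Finset.card_eq_one.mp hc
      have hxm : x ∈ e'.filter (fun x => x.1 = ai) := by rw [hx]; simp
      have hx1 : x.1 = ai := (Finset.mem_filter.mp hxm).2
      exact h1 ⟨x.2, by rw [hx]; congr 1; rw [← hx1]⟩

lemma valid_not_touch {i : ℕ} {e : Finset (Fin n × Fin p)} (hi : i < n)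
    (hsl : e.filter (fun x => x.1 = (⟨i, hi⟩ : Fin n)) = ∅) :
    validP h (i + 1) e ↔ validP h i e := by
  have hnt : ∀ x ∈ e, x.1 ≠ (⟨i, hi⟩ : Fin n) := by
    intro x hx hx1
    have : x ∈ e.filter (fun x => x.1 = (⟨i, hi⟩ : Fin n)) := Finset.mem_filter.mpr ⟨hx, hx1⟩
    rw [hsl] at this; simp at this
  unfold validP
  constructor
  · rintro ⟨h1, h2, h3⟩
    refine ⟨h1, h2, fun x hx => ?_⟩
    have := h3 x hx
    have hne := hnt x hx
    have : x.1.val ≠ i := fun hv => hne (Fin.ext hv)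
    omega
  · rintro ⟨h1, h2, h3⟩
    exact ⟨h1, h2, fun x hx => Nat.lt_succ_of_lt (h3 x hx)⟩

lemma valid_insert {i : ℕ} {e : Finset (Fin n × Fin p)} (hi : i < n) (b : Fin p)
    (hsl : e.filter (fun x => x.1 = (⟨i, hi⟩ : Fin n)) = ∅) :
    validP h (i + 1) (insert ((⟨i, hi⟩ : Fin n), b) e) ↔ validP h i e ∧ e.card < h := by
  classical
  set ai : Fin n := ⟨i, hi⟩ with hai
  have hnm : (ai, b) ∉ e := by
    intro hmem
    have : (ai, b) ∈ e.filter (fun x => x.1 = ai) := Finset.mem_filter.mpr ⟨hmem, rfl⟩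
    rw [hsl] at this; simp at this
  have hnt : ∀ x ∈ e, x.1 ≠ ai := by
    intro x hx hx1
    have : x ∈ e.filter (fun x => x.1 = ai) := Finset.mem_filter.mpr ⟨hx, hx1⟩
    rw [hsl] at this; simp at this
  have hcard : (insert (ai, b) e).card = e.card + 1 := Finset.card_insert_of_notMem hnm
  constructor
  · rintro ⟨h1, h2, h3⟩
    rw [hcard] at h2
    refine ⟨⟨?_, by omega, ?_⟩, by omega⟩
    · intro a
      have := h1 a
      calc (e.filter (fun x => x.1 = a)).card
          ≤ ((insert (ai, b) e).filter (fun x => x.1 = a)).card :=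
            Finset.card_le_card (Finset.filter_subset_filter _ (Finset.subset_insert _ _))
        _ ≤ 1 := this
    · intro x hx
      have := h3 x (Finset.mem_insert_of_mem hx)
      have hne := hnt x hx
      have : x.1.val ≠ i := fun hv => hne (Fin.ext hv)
      omega
  · rintro ⟨⟨h1, h2, h3⟩, h4⟩
    refine ⟨?_, by omega, ?_⟩
    · intro a
      rw [Finset.filter_insert]
      by_cases ha : a = ai
      · rw [ha, if_pos rfl, hsl]
        simp
      · rw [if_neg (by simpa using fun hh' => ha hh'.symm)]
        exact h1 a
    · intro x hx
      rcases Finset.mem_insert.mp hx with rfl | hx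
      · simp [hai]
      · exact Nat.lt_succ_of_lt (h3 x hx)

end MainStep

section MainStep2

lemma step_invariant (n h p r s k i : ℕ) (hh : 2 ≤ h) (hn : h ≤ n) (hp : 1 ≤ p)
    (hr : 1 ≤ r) (hs : n * p * r = h * s) (hi : i < n)
    (c : Fin k → Finset (Fin n × Fin p) → ℕ)
    (hcol : ∀ e, ∑ j, c j e = Mw n h p i e)
    (hrow : ∀ j, ∑ e, c j e = s)
    (hdeg : ∀ j, ∀ v : Fin n × Fin p, v.1.val < i → ∑ e, (if v ∈ e then c j e else 0) = r) :
    ∃ c' : Fin k → Finset (Fin n × Fin p) → ℕ,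
      (∀ e, ∑ j, c' j e = Mw n h p (i + 1) e) ∧
      (∀ j, ∑ e, c' j e = s) ∧
      (∀ j, ∀ v : Fin n × Fin p, v.1.val < i + 1 →
        ∑ e, (if v ∈ e then c' j e else 0) = r) := by
  classical
  set ai : Fin n := ⟨i, hi⟩ with hai
  have hcle : ∀ j e, c j e ≤ Mw n h p i e := by
    intro j e
    rw [← hcol e]
    exact Finset.single_le_sum (f := fun j => c j e) (fun _ _ => Nat.zero_le _)
      (Finset.mem_univ j)
  have hc0 : ∀ j e, ¬ validP h i e → c j e = 0 := by
    intro j e hv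
    have := hcle j e
    rw [Mw, if_neg hv] at this
    omega
  have hwle : ∀ j e, c j e ≠ 0 → h - e.card ≤ n - i := by
    intro j e hne
    have hv : validP h i e := by
      by_contra hv; exact hne (hc0 j e hv)
    by_contra hgt
    push_neg at hgt
    have hch : (n - i).choose (h - e.card) = 0 := Nat.choose_eq_zero_of_lt hgt
    have hle := hcle j e
    rw [Mw, if_pos hv, mws, hch, Nat.zero_mul] at hle
    omega
  have hcard_le : ∀ j e, c j e ≠ 0 → e.card ≤ h := by
    intro j e hne
    have hv : validP h i e := by
      by_contra hv; exact hne (hc0 j e hv)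
    exact hv.2.1
  -- A1 : degree-sum identity
  have hA1 : ∀ j, ∑ e, c j e * e.card = (i * p) * r := by
    intro j
    have step1 : ∀ e : Finset (Fin n × Fin p),
        c j e * e.card = ∑ v : Fin n × Fin p, (if v ∈ e then c j e else 0) := by
      intro e
      rw [card_as_sum, Finset.mul_sum]
      apply Finset.sum_congr rfl
      intro v _
      by_cases hv : v ∈ e <;> simp [hv]
    rw [Finset.sum_congr rfl (fun e _ => step1 e), Finset.sum_comm]
    have step2 : ∀ v : Fin n × Fin p,
        (∑ e, if v ∈ e then c j e else 0) = if v.1.val < i then r else 0 := by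
      intro v
      by_cases hv : v.1.val < i
      · rw [if_pos hv]; exact hdeg j v hv
      · rw [if_neg hv]
        apply Finset.sum_eq_zero
        intro e _
        by_cases hve : v ∈ e
        · rw [if_pos hve]
          by_contra hne
          have hval : validP h i e := by
            by_contra hvv; exact hne (hc0 j e hvv)
          exact hv (hval.2.2 v hve)
        · rw [if_neg hve]
    rw [Finset.sum_congr rfl (fun v _ => step2 v), ← Finset.sum_filter, Finset.sum_const,
      card_filter_part_lt n p i (le_of_lt hi), smul_eq_mul]
  -- A2 : row sums of weighted matrix
  have hA2 : ∀ j, ∑ e, c j e * (h - e.card) = (n - i) * (p * r) := by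
    intro j
    have key : ∑ e, (c j e * (h - e.card) + c j e * e.card) = ∑ e, c j e * h := by
      apply Finset.sum_congr rfl
      intro e _
      by_cases hne : c j e = 0
      · simp [hne]
      · have := hcard_le j e hne
        rw [← Nat.mul_add]
        congr 1
        omega
    rw [Finset.sum_add_distrib, hA1 j] at key
    have hch : ∑ e, c j e * h = s * h := by
      rw [← Finset.sum_mul, hrow j]
    rw [hch] at key
    have hsh : s * h = n * p * r := by rw [hs]; ring
    have h1 : n * p * r = n * (p * r) := by ring
    have h2 : (i * p) * r = i * (p * r) := by ring
    have h3 : (n - i) * (p * r) = n * (p * r) - i * (p * r) := Nat.sub_mul n i (p * r)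
    omega
  -- target column values
  set minc : Finset (Fin n × Fin p) → ℕ := fun e =>
    if validP h i e ∧ e.card < h then (n - i - 1).choose (h - e.card - 1) * p ^ (h - e.card)
    else 0 with hminc
  set qe : Finset (Fin n × Fin p) → ℕ := fun e =>
    if validP h i e ∧ e.card < h then (n - i - 1).choose (h - e.card - 1) * p ^ (h - e.card - 1)
    else 0 with hqe
  have hmincP : ∀ e, validP h i e → e.card < h →
      minc e = (n - i - 1).choose (h - e.card - 1) * p ^ (h - e.card) := by
    intro e h1 h2; simp only [hminc]; rw [if_pos ⟨h1, h2⟩]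
  have hmincN : ∀ e, ¬ (validP h i e ∧ e.card < h) → minc e = 0 := by
    intro e h1; simp only [hminc]; rw [if_neg h1]
  have hqeP : ∀ e, validP h i e → e.card < h →
      qe e = (n - i - 1).choose (h - e.card - 1) * p ^ (h - e.card - 1) := by
    intro e h1 h2; simp only [hqe]; rw [if_pos ⟨h1, h2⟩]
  have hqeN : ∀ e, ¬ (validP h i e ∧ e.card < h) → qe e = 0 := by
    intro e h1; simp only [hqe]; rw [if_neg h1]
  have hA3 : ∀ e, ∑ j, c j e * (h - e.card) = (n - i) * minc e := by
    intro e
    rw [← Finset.sum_mul, hcol e, Mw]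
    by_cases hv : validP h i e
    · rw [if_pos hv]
      by_cases hch : e.card < h
      · have hkey : (n - i) * ((n - i - 1).choose (h - e.card - 1))
            = (n - i).choose (h - e.card) * (h - e.card) := by
          have := Nat.add_one_mul_choose_eq (n - i - 1) (h - e.card - 1)
          rw [show n - i - 1 + 1 = n - i by omega, show h - e.card - 1 + 1 = h - e.card by omega]
            at this
          exact this
        rw [hmincP e hv hch]
        calc mws n h p i e * (h - e.card)
            = ((n - i).choose (h - e.card) * (h - e.card)) * p ^ (h - e.card) := by
              rw [mws]; ring
          _ = ((n - i) * ((n - i - 1).choose (h - e.card - 1))) * p ^ (h - e.card) := by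
              rw [hkey]
          _ = (n - i) * ((n - i - 1).choose (h - e.card - 1) * p ^ (h - e.card)) := by ring
      · have hzero : h - e.card = 0 := by omega
        rw [hmincN e (fun hco => hch hco.2), mws, hzero]
        simp
    · rw [if_neg hv, hmincN e (fun hco => hv hco.1)]
      simp
  have hA4 : ∀ j e, c j e * (h - e.card) ≤ (n - i) * c j e := by
    intro j e
    by_cases hne : c j e = 0
    · simp [hne]
    · rw [Nat.mul_comm (n - i) (c j e)]
      exact Nat.mul_le_mul_left _ (hwle j e hne)
  obtain ⟨z, hzrow, hzcol, hzle⟩ := round_with_caps (n - i) (by omega)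
    (fun j e => c j e * (h - e.card)) c (fun _ => p * r) minc hA2 hA3 hA4
  have hminc_qe : ∀ e, minc e = p * qe e := by
    intro e
    by_cases hv : validP h i e
    · by_cases hch : e.card < h
      · rw [hmincP e hv hch, hqeP e hv hch]
        have ht : h - e.card = (h - e.card - 1) + 1 := by omega
        generalize hgen : h - e.card - 1 = t at ht ⊢
        rw [ht, pow_succ]
        ring
      · rw [hmincN e (fun hco => hch hco.2), hqeN e (fun hco => hch hco.2), Nat.mul_zero]
    · rw [hmincN e (fun hco => hv hco.1), hqeN e (fun hco => hv hco.1), Nat.mul_zero]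
  obtain ⟨u, hu1, hu2, hu3⟩ := split_p p z (fun _ => r) qe
    (fun j => by rw [hzrow j])
    (fun e => by rw [hzcol e, hminc_qe e])
  have hule : ∀ b j e, u b j e ≤ z j e := by
    intro b j e
    rw [← hu1 j e]
    exact Finset.single_le_sum (f := fun b => u b j e) (fun _ _ => Nat.zero_le _)
      (Finset.mem_univ b)
  -- vanishing off the "no part-i vertex" set
  have hvan : ∀ j (e : Finset (Fin n × Fin p)), e.filter (fun x => x.1 = ai) ≠ ∅ →
      c j e = 0 := by
    intro j e hne
    apply hc0
    rintro ⟨_, _, h3⟩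
    apply hne
    rw [Finset.filter_eq_empty_iff]
    intro x hx hx1
    have := h3 x hx
    rw [hx1] at this
    simp [hai] at this
  set SA := Finset.univ.filter
    (fun e : Finset (Fin n × Fin p) => e.filter (fun x => x.1 = ai) = ∅) with hSA
  have hSAmem : ∀ e : Finset (Fin n × Fin p),
      e ∈ SA ↔ e.filter (fun x => x.1 = ai) = ∅ := by
    intro e
    rw [hSA]
    simp
  have hSAnm : ∀ e : Finset (Fin n × Fin p), e ∈ SA → ∀ b : Fin p, (ai, b) ∉ e := by
    intro e he b hmem
    have : (ai, b) ∈ e.filter (fun x => x.1 = ai) := Finset.mem_filter.mpr ⟨hmem, rfl⟩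
    rw [(hSAmem e).mp he] at this
    simp at this
  set cA : Fin k → Finset (Fin n × Fin p) → ℕ := fun j e' =>
    if e'.filter (fun x => x.1 = ai) = ∅ then c j e' - z j e' else 0 with hcA
  set cB : Fin k → Finset (Fin n × Fin p) → ℕ := fun j e' =>
    ∑ b, if e'.filter (fun x => x.1 = ai) = {(ai, b)} then u b j (e'.erase (ai, b)) else 0
    with hcB
  have hcAval : ∀ j e', cA j e' = if e'.filter (fun x => x.1 = ai) = ∅
      then c j e' - z j e' else 0 := fun j e' => rfl
  have hcBval : ∀ j e', cB j e' = ∑ b, if e'.filter (fun x => x.1 = ai) = {(ai, b)}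
      then u b j (e'.erase (ai, b)) else 0 := fun j e' => rfl
  refine ⟨fun j e' => cA j e' + cB j e', ?_, ?_, ?_⟩
  · -- column sums
    intro e'
    rw [Finset.sum_add_distrib]
    have hsumA : ∑ j, cA j e'
        = if e'.filter (fun x => x.1 = ai) = ∅ then Mw n h p i e' - minc e' else 0 := by
      by_cases hcond : e'.filter (fun x => x.1 = ai) = ∅
      · rw [if_pos hcond]
        rw [Finset.sum_congr rfl (fun j _ => by rw [hcAval j e', if_pos hcond])]
        rw [Finset.sum_tsub_distrib _ (fun j _ => hzle j e'), hcol e', hzcol e']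
      · rw [if_neg hcond]
        rw [Finset.sum_congr rfl (fun j _ => by rw [hcAval j e', if_neg hcond])]
        exact Finset.sum_const_zero
    have hsumB : ∑ j, cB j e'
        = ∑ b, if e'.filter (fun x => x.1 = ai) = {(ai, b)} then qe (e'.erase (ai, b)) else 0 := by
      rw [Finset.sum_congr rfl (fun j _ => hcBval j e'), Finset.sum_comm]
      apply Finset.sum_congr rfl
      intro b _
      by_cases hcond : e'.filter (fun x => x.1 = ai) = {(ai, b)}
      · rw [Finset.sum_congr rfl (fun j _ => by rw [if_pos hcond]), if_pos hcond]
        exact hu3 b _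
      · rw [Finset.sum_congr rfl (fun j _ => by rw [if_neg hcond]), if_neg hcond]
        exact Finset.sum_const_zero
    rw [hsumA, hsumB]
    rcases slice_cases ai e' with hsl | ⟨b0, hsl⟩ | ⟨hne0, hnsing, hntv⟩
    · -- case A
      rw [if_pos hsl]
      have hzero : ∀ b : Fin p, (if e'.filter (fun x => x.1 = ai) = {(ai, b)}
          then qe (e'.erase (ai, b)) else 0) = 0 := by
        intro b
        rw [if_neg]
        rw [hsl]
        intro hEq
        exact absurd hEq.symm (Finset.singleton_ne_empty _)
      rw [Finset.sum_congr rfl (fun b _ => hzero b), Finset.sum_const_zero, Nat.add_zero]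
      have hvv := valid_not_touch (h := h) hi hsl
      rw [Mw, Mw]
      by_cases hv : validP h i e'
      · rw [if_pos hv, if_pos (hvv.mpr hv)]
        by_cases hch : e'.card < h
        · rw [hmincP e' hv hch]
          rw [mws, mws]
          have hpascal : (n - i).choose (h - e'.card)
              = (n - i - 1).choose (h - e'.card - 1) + (n - i - 1).choose (h - e'.card) := by
            have h1 : n - i = (n - i - 1) + 1 := by omega
            have h2 : h - e'.card = (h - e'.card - 1) + 1 := by omega
            rw [h1, h2]
            exact Nat.choose_succ_succ _ _
          rw [show n - (i + 1) = n - i - 1 by omega, hpascal, Nat.add_mul]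
          omega
        · rw [hmincN e' (fun hco => hch hco.2)]
          have hvcard : e'.card ≤ h := hv.2.1
          have hcdeq : e'.card = h := by omega
          rw [mws, mws, hcdeq]
          simp
      · rw [if_neg hv, if_neg (fun hv' => hv (hvv.mp hv')), hmincN e' (fun hco => hv hco.1)]
    · -- case B : slice is a singleton
      have hnsl : e'.filter (fun x => x.1 = ai) ≠ ∅ := by
        rw [hsl]; exact Finset.singleton_ne_empty _
      rw [if_neg hnsl, Nat.zero_add]
      have hmem : (ai, b0) ∈ e' := by
        have : (ai, b0) ∈ e'.filter (fun x => x.1 = ai) := by rw [hsl]; simp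
        exact (Finset.mem_filter.mp this).1
      have hcongr : ∀ b : Fin p, (if e'.filter (fun x => x.1 = ai) = {(ai, b)}
          then qe (e'.erase (ai, b)) else 0)
          = if b = b0 then qe (e'.erase (ai, b0)) else 0 := by
        intro b
        by_cases hb : b = b0
        · subst hb
          rw [if_pos hsl, if_pos rfl]
        · rw [if_neg, if_neg hb]
          rw [hsl]
          intro hEq
          have hpair : ((ai, b0) : Fin n × Fin p) = (ai, b) := Finset.singleton_injective hEq
          exact hb (congrArg Prod.snd hpair).symm
      rw [Finset.sum_congr rfl (fun b _ => hcongr b), Finset.sum_ite_eq' Finset.univ b0,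
        if_pos (Finset.mem_univ b0)]
      -- qe (erase) = Mw (i+1) e'
      have hesl : (e'.erase (ai, b0)).filter (fun x => x.1 = ai) = ∅ := by
        rw [Finset.filter_erase, hsl]
        simp
      have hins : insert (ai, b0) (e'.erase (ai, b0)) = e' := Finset.insert_erase hmem
      have hcard : e'.card = (e'.erase (ai, b0)).card + 1 := by
        rw [Finset.card_erase_of_mem hmem]
        have : 1 ≤ e'.card := Finset.card_pos.mpr ⟨_, hmem⟩
        omega
      have hvv : validP h (i + 1) e' ↔ validP h i (e'.erase (ai, b0))
          ∧ (e'.erase (ai, b0)).card < h := by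
        conv_lhs => rw [← hins]
        exact valid_insert hi b0 hesl
      rw [Mw]
      by_cases hv : validP h i (e'.erase (ai, b0)) ∧ (e'.erase (ai, b0)).card < h
      · rw [if_pos (hvv.mpr hv), hqeP _ hv.1 hv.2, mws]
        rw [show h - e'.card = h - (e'.erase (ai, b0)).card - 1 by omega,
          show n - (i + 1) = n - i - 1 by omega]
      · rw [if_neg (fun hv' => hv (hvv.mp hv')), hqeN _ hv]
    · -- case C : not transversal
      rw [if_neg hne0]
      have hzero : ∀ b : Fin p, (if e'.filter (fun x => x.1 = ai) = {(ai, b)}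
          then qe (e'.erase (ai, b)) else 0) = 0 := fun b => if_neg (hnsing b)
      rw [Finset.sum_congr rfl (fun b _ => hzero b), Finset.sum_const_zero, Nat.add_zero,
        Mw, if_neg]
      rintro ⟨htv, _, _⟩
      exact hntv htv
  · -- row sums
    intro j
    rw [Finset.sum_add_distrib]
    have hsumA : ∑ e', cA j e' = s - p * r := by
      have h1 : ∑ e', cA j e' = ∑ e' ∈ SA, (c j e' - z j e') := by
        rw [hSA, Finset.sum_filter]
      rw [h1]
      rw [Finset.sum_subset (Finset.filter_subset _ _)]
      · rw [Finset.sum_tsub_distrib _ (fun e _ => hzle j e), hrow j, hzrow j]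
      · intro e _ hmem
        have hne : e.filter (fun x => x.1 = ai) ≠ ∅ := by
          simp only [Finset.mem_filter, Finset.mem_univ, true_and] at hmem
          exact hmem
        have hc := hvan j e hne
        have hz := hzle j e
        omega
    have hsumB : ∑ e', cB j e' = p * r := by
      rw [Finset.sum_congr rfl (fun e' _ => hcBval j e'), Finset.sum_comm]
      have hone : ∀ b : Fin p,
          (∑ e' : Finset (Fin n × Fin p), if e'.filter (fun x => x.1 = ai) = {(ai, b)}
            then u b j (e'.erase (ai, b)) else 0) = r := by
        intro b
        rw [show (∑ e' : Finset (Fin n × Fin p), if e'.filter (fun x => x.1 = ai) = {(ai, b)}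
              then u b j (e'.erase (ai, b)) else 0)
            = ∑ e' ∈ Finset.univ.filter
              (fun e' : Finset (Fin n × Fin p) => e'.filter (fun x => x.1 = ai) = {(ai, b)}),
              u b j (e'.erase (ai, b)) from (Finset.sum_filter _ _).symm]
        rw [sum_slice_insert ai b (fun e' => u b j (e'.erase (ai, b)))]
        have hcongr : ∀ e ∈ Finset.univ.filter
            (fun e : Finset (Fin n × Fin p) => e.filter (fun x => x.1 = ai) = ∅),
            u b j ((insert (ai, b) e).erase (ai, b)) = u b j e := by
          intro e he
          simp only [Finset.mem_filter, Finset.mem_univ, true_and] at he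
          congr 1
          apply Finset.erase_insert
          intro hmem
          have : (ai, b) ∈ e.filter (fun x => x.1 = ai) := Finset.mem_filter.mpr ⟨hmem, rfl⟩
          rw [he] at this; simp at this
        rw [Finset.sum_congr rfl hcongr]
        rw [Finset.sum_subset (Finset.filter_subset _ _)]
        · exact hu2 b j
        · intro e _ hmem
          simp only [Finset.mem_filter, Finset.mem_univ, true_and] at hmem
          have hc := hvan j e hmem
          have hz := hzle j e
          have hu := hule b j e
          omega
      rw [Finset.sum_congr rfl (fun b _ => hone b), Finset.sum_const, smul_eq_mul,
        Finset.card_univ, Fintype.card_fin, mul_comm]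
    rw [hsumA, hsumB]
    have hprs : p * r ≤ s := by
      have h1 := hzrow j
      have h2 := hrow j
      have : ∑ e, z j e ≤ ∑ e, c j e := Finset.sum_le_sum (fun e _ => hzle j e)
      omega
    omega
  · -- degrees
    intro j v hv
    have hsplit : ∀ e : Finset (Fin n × Fin p),
        (if v ∈ e then cA j e + cB j e else 0)
        = (if v ∈ e then cA j e else 0) + (if v ∈ e then cB j e else 0) := by
      intro e; by_cases hve : v ∈ e <;> simp [hve]
    rw [Finset.sum_congr rfl (fun e _ => hsplit e), Finset.sum_add_distrib]
    -- transform the B part generically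
    have hBgen : ∑ e', (if v ∈ e' then cB j e' else 0)
        = ∑ b, ∑ e ∈ SA, (if v ∈ insert (ai, b) e then u b j e else 0) := by
      have step1 : ∀ e' : Finset (Fin n × Fin p), (if v ∈ e' then cB j e' else 0)
          = ∑ b, (if e'.filter (fun x => x.1 = ai) = {(ai, b)}
              then (if v ∈ e' then u b j (e'.erase (ai, b)) else 0) else 0) := by
        intro e'
        by_cases hve : v ∈ e'
        · rw [if_pos hve, hcBval]
          apply Finset.sum_congr rfl
          intro b _
          by_cases hcond : e'.filter (fun x => x.1 = ai) = {(ai, b)}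
          · rw [if_pos hcond, if_pos hcond, if_pos hve]
          · rw [if_neg hcond, if_neg hcond]
        · rw [if_neg hve]
          symm
          apply Finset.sum_eq_zero
          intro b _
          by_cases hcond : e'.filter (fun x => x.1 = ai) = {(ai, b)}
          · rw [if_pos hcond, if_neg hve]
          · rw [if_neg hcond]
      rw [Finset.sum_congr rfl (fun e' _ => step1 e'), Finset.sum_comm]
      apply Finset.sum_congr rfl
      intro b _
      rw [show (∑ e' : Finset (Fin n × Fin p), if e'.filter (fun x => x.1 = ai) = {(ai, b)}
            then (if v ∈ e' then u b j (e'.erase (ai, b)) else 0) else 0)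
          = ∑ e' ∈ Finset.univ.filter
            (fun e' : Finset (Fin n × Fin p) => e'.filter (fun x => x.1 = ai) = {(ai, b)}),
            (if v ∈ e' then u b j (e'.erase (ai, b)) else 0) from (Finset.sum_filter _ _).symm]
      rw [sum_slice_insert ai b (fun e' => if v ∈ e' then u b j (e'.erase (ai, b)) else 0)]
      rw [hSA]
      apply Finset.sum_congr rfl
      intro e he
      simp only [Finset.mem_filter, Finset.mem_univ, true_and] at he
      have hnm : (ai, b) ∉ e := by
        intro hmem
        have : (ai, b) ∈ e.filter (fun x => x.1 = ai) := Finset.mem_filter.mpr ⟨hmem, rfl⟩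
        rw [he] at this; simp at this
      rw [Finset.erase_insert hnm]
    by_cases hvi : v.1.val < i
    · -- old vertex
      have hvne : ∀ b : Fin p, v ≠ (ai, b) := by
        intro b hEq
        rw [hEq] at hvi
        simp [hai] at hvi
      have hA : ∑ e', (if v ∈ e' then cA j e' else 0)
          = ∑ e ∈ SA, (if v ∈ e then c j e - z j e else 0) := by
        rw [hSA, Finset.sum_filter]
        apply Finset.sum_congr rfl
        intro e _
        by_cases hcond : e.filter (fun x => x.1 = ai) = ∅
        · rw [if_pos hcond]
          by_cases hve : v ∈ e
          · rw [if_pos hve, if_pos hve, hcAval, if_pos hcond]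
          · rw [if_neg hve, if_neg hve]
        · rw [if_neg hcond]
          by_cases hve : v ∈ e
          · rw [if_pos hve, hcAval, if_neg hcond]
          · rw [if_neg hve]
      have hB : ∑ e', (if v ∈ e' then cB j e' else 0)
          = ∑ e ∈ SA, (if v ∈ e then z j e else 0) := by
        rw [hBgen]
        have hmm : ∀ b : Fin p, ∀ e ∈ SA,
            (if v ∈ insert (ai, b) e then u b j e else 0) = (if v ∈ e then u b j e else 0) := by
          intro b e _
          by_cases hve : v ∈ e
          · rw [if_pos hve, if_pos (Finset.mem_insert_of_mem hve)]
          · rw [if_neg hve, if_neg]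
            intro hmem
            rcases Finset.mem_insert.mp hmem with hEq | hx
            · exact hvne b hEq
            · exact hve hx
        rw [Finset.sum_congr rfl (fun b _ => Finset.sum_congr rfl (hmm b)), Finset.sum_comm]
        apply Finset.sum_congr rfl
        intro e _
        by_cases hve : v ∈ e
        · rw [if_pos hve]
          rw [Finset.sum_congr rfl (fun b _ => if_pos hve), hu1]
        · rw [if_neg hve]
          rw [Finset.sum_congr rfl (fun b _ => if_neg hve), Finset.sum_const_zero]
      rw [hA, hB, ← Finset.sum_add_distrib]
      have hmerge : ∀ e ∈ SA, (if v ∈ e then c j e - z j e else 0) + (if v ∈ e then z j e else 0)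
          = (if v ∈ e then c j e else 0) := by
        intro e _
        by_cases hve : v ∈ e
        · rw [if_pos hve, if_pos hve, if_pos hve]
          have := hzle j e
          omega
        · rw [if_neg hve, if_neg hve, if_neg hve]
      rw [Finset.sum_congr rfl hmerge]
      rw [Finset.sum_subset (Finset.filter_subset _ _)]
      · exact hdeg j v hvi
      · intro e _ hmem
        simp only [Finset.mem_filter, Finset.mem_univ, true_and] at hmem
        rw [hvan j e hmem]
        simp
    · -- new vertex : v.1 = ai
      have hv1 : v.1 = ai := by
        apply Fin.ext
        simp only [hai]
        omega
      have hA : ∑ e', (if v ∈ e' then cA j e' else 0) = 0 := by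
        apply Finset.sum_eq_zero
        intro e _
        by_cases hve : v ∈ e
        · rw [if_pos hve, hcAval]
          rw [if_neg]
          intro hcond
          have : v ∈ e.filter (fun x => x.1 = ai) := Finset.mem_filter.mpr ⟨hve, hv1⟩
          rw [hcond] at this
          simp at this
        · rw [if_neg hve]
      have hB : ∑ e', (if v ∈ e' then cB j e' else 0) = r := by
        rw [hBgen]
        have hmm : ∀ b : Fin p, ∀ e ∈ SA,
            (if v ∈ insert (ai, b) e then u b j e else 0)
            = (if b = v.2 then u b j e else 0) := by
          intro b e he
          by_cases hb : b = v.2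
          · subst hb
            rw [if_pos rfl, if_pos]
            have hveq : (ai, v.2) = v := by
              rw [← hv1]
            rw [hveq]
            exact Finset.mem_insert_self v e
          · rw [if_neg hb, if_neg]
            intro hmem
            rcases Finset.mem_insert.mp hmem with hEq | hx
            · apply hb
              rw [hEq]
            · exact absurd ((Finset.mem_filter.mpr ⟨hx, hv1⟩ : v ∈ e.filter (fun x => x.1 = ai)))
                (by rw [(hSAmem e).mp he]; simp)
        rw [Finset.sum_congr rfl (fun b _ => Finset.sum_congr rfl (hmm b)), Finset.sum_comm]
        have hinner : ∀ e ∈ SA, (∑ b, if b = v.2 then u b j e else 0) = u v.2 j e := by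
          intro e _
          rw [Finset.sum_ite_eq' Finset.univ v.2 (fun b => u b j e), if_pos (Finset.mem_univ _)]
        rw [Finset.sum_congr rfl hinner]
        rw [Finset.sum_subset (Finset.filter_subset _ _)]
        · exact hu2 v.2 j
        · intro e _ hmem
          simp only [Finset.mem_filter, Finset.mem_univ, true_and] at hmem
          have hc := hvan j e hmem
          have hz := hzle j e
          have hu := hule v.2 j e
          omega
      rw [hA, hB, Nat.zero_add]

end MainStep2

section Assemble

lemma ks_eq (n h p r s k : ℕ) (hh : 2 ≤ h) (hn : h ≤ n) (hp : 1 ≤ p) (hr : 1 ≤ r)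
    (hs : n * p * r = h * s) (hk : (n - 1).choose (h - 1) * p ^ (h - 1) = r * k) :
    k * s = n.choose h * p ^ h := by
  have hid : n * (n - 1).choose (h - 1) = n.choose h * h := by
    have := Nat.add_one_mul_choose_eq (n - 1) (h - 1)
    rw [show n - 1 + 1 = n by omega, show h - 1 + 1 = h by omega] at this
    exact this
  have hpow : p ^ (h - 1) * p = p ^ h := by
    rw [← pow_succ, show h - 1 + 1 = h by omega]
  have key : k * s * (h * r) = n.choose h * p ^ h * (h * r) := by
    calc k * s * (h * r) = (r * k) * (h * s) := by ring
      _ = ((n - 1).choose (h - 1) * p ^ (h - 1)) * (n * p * r) := by rw [hk, hs]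
      _ = (n * (n - 1).choose (h - 1)) * (p ^ (h - 1) * p) * r := by ring
      _ = (n.choose h * h) * p ^ h * r := by rw [hid, hpow]
      _ = n.choose h * p ^ h * (h * r) := by ring
  have hhr : 0 < h * r := by positivity
  exact Nat.eq_of_mul_eq_mul_right hhr key

lemma exists_invariant (n h p r s k : ℕ) (hh : 2 ≤ h) (hn : h ≤ n) (hp : 1 ≤ p)
    (hr : 1 ≤ r) (hs : n * p * r = h * s)
    (hk : (n - 1).choose (h - 1) * p ^ (h - 1) = r * k) :
    ∀ i, i ≤ n → ∃ c : Fin k → Finset (Fin n × Fin p) → ℕ,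
      (∀ e, ∑ j, c j e = Mw n h p i e) ∧
      (∀ j, ∑ e, c j e = s) ∧
      (∀ j, ∀ v : Fin n × Fin p, v.1.val < i → ∑ e, (if v ∈ e then c j e else 0) = r) := by
  intro i
  induction i with
  | zero =>
    intro _
    classical
    refine ⟨fun j e => if e = ∅ then s else 0, ?_, ?_, ?_⟩
    · intro e
      by_cases he : e = (∅ : Finset (Fin n × Fin p))
      · subst he
        rw [Finset.sum_congr rfl (fun j _ => if_pos rfl), Finset.sum_const, smul_eq_mul,
          Finset.card_univ, Fintype.card_fin]
        rw [Mw, if_pos, mws]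
        · simp only [Finset.card_empty, Nat.sub_zero]
          exact ks_eq n h p r s k hh hn hp hr hs hk
        · exact ⟨fun a => by simp, by simp, by simp⟩
      · rw [Finset.sum_congr rfl (fun j _ => if_neg he), Finset.sum_const_zero, Mw, if_neg]
        rintro ⟨-, -, h3⟩
        obtain ⟨x, hx⟩ := Finset.nonempty_iff_ne_empty.mpr he
        exact absurd (h3 x hx) (by omega)
    · intro j
      rw [Finset.sum_ite_eq' Finset.univ (∅ : Finset (Fin n × Fin p)) (fun _ => s),
        if_pos (Finset.mem_univ _)]
    · intro j v hv
      omega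
  | succ m ihm =>
    intro hm
    obtain ⟨c, h1, h2, h3⟩ := ihm (by omega)
    exact step_invariant n h p r s k m hh hn hp hr hs (by omega) c h1 h2 h3

end Assemble

section Endgame

lemma Mw_final (n h p : ℕ) (e : Finset (Fin n × Fin p)) :
    Mw n h p n e = if tvP e ∧ e.card = h then 1 else 0 := by
  classical
  rw [Mw]
  by_cases htv : tvP e
  · by_cases hch : e.card = h
    · rw [if_pos ⟨htv, by omega, fun x _ => x.1.2⟩, if_pos ⟨htv, hch⟩, mws, hch]
      simp
    · rw [if_neg (fun hco : tvP e ∧ e.card = h => hch hco.2)]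
      by_cases hle : e.card ≤ h
      · rw [if_pos ⟨htv, hle, fun x _ => x.1.2⟩, mws]
        rw [Nat.choose_eq_zero_of_lt (by omega), Nat.zero_mul]
      · rw [if_neg (fun hco : validP h n e => hle hco.2.1)]
  · rw [if_neg (fun hco : validP h n e => htv hco.1),
      if_neg (fun hco : tvP e ∧ e.card = h => htv hco.1)]

lemma count_finset_val {α : Type*} [DecidableEq α] (s : Finset α) (a : α) :
    s.val.count a = if a ∈ s then 1 else 0 := by
  by_cases ha : a ∈ s
  · rw [if_pos ha]
    exact Multiset.count_eq_one_of_mem s.nodup ha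
  · rw [if_neg ha]
    exact Multiset.count_eq_zero_of_notMem ha

/-- insertion of a fresh-part vertex preserves transversality -/
lemma tv_insert {n p : ℕ} (a : Fin n) (b : Fin p) (e : Finset (Fin n × Fin p))
    (hsl : e.filter (fun x => x.1 = a) = ∅) :
    tvP (insert (a, b) e) ↔ tvP e := by
  classical
  constructor
  · intro h1 a'
    calc (e.filter (fun x => x.1 = a')).card
        ≤ ((insert (a, b) e).filter (fun x => x.1 = a')).card :=
          Finset.card_le_card (Finset.filter_subset_filter _ (Finset.subset_insert _ _))
      _ ≤ 1 := h1 a'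
  · intro h1 a'
    rw [Finset.filter_insert]
    by_cases ha : a' = a
    · rw [ha, if_pos rfl, hsl]
      simp
    · rw [if_neg (by simpa using fun hh' => ha hh'.symm)]
      exact h1 a'

/-- counting transversal `t`-subsets with parts in `A` -/
lemma count_transversal {n p : ℕ} (A : Finset (Fin n)) (t : ℕ) :
    ((Finset.univ : Finset (Finset (Fin n × Fin p))).filter
      (fun e => tvP e ∧ (∀ x ∈ e, x.1 ∈ A) ∧ e.card = t)).card
    = A.card.choose t * p ^ t := by
  classical
  induction A using Finset.induction_on generalizing t with
  | empty =>
    rcases Nat.eq_zero_or_pos t with rfl | ht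
    · rw [show ((Finset.univ : Finset (Finset (Fin n × Fin p))).filter
          (fun e => tvP e ∧ (∀ x ∈ e, x.1 ∈ (∅ : Finset (Fin n))) ∧ e.card = 0))
          = {∅} from ?_]
      · simp
      · ext e
        simp only [Finset.mem_filter, Finset.mem_univ, true_and, Finset.mem_singleton]
        constructor
        · rintro ⟨-, -, hc⟩; exact Finset.card_eq_zero.mp hc
        · rintro rfl
          exact ⟨fun a => by simp, by simp, by simp⟩
    · rw [show ((Finset.univ : Finset (Finset (Fin n × Fin p))).filter
          (fun e => tvP e ∧ (∀ x ∈ e, x.1 ∈ (∅ : Finset (Fin n))) ∧ e.card = t))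
          = ∅ from ?_]
      · simp [Nat.choose_eq_zero_of_lt ht]
      · rw [Finset.eq_empty_iff_forall_notMem]
        intro e he
        simp only [Finset.mem_filter, Finset.mem_univ, true_and] at he
        obtain ⟨-, hA, hc⟩ := he
        obtain ⟨x, hx⟩ := Finset.card_pos.mp (by omega : 0 < e.card)
        exact absurd (hA x hx) (by simp)
  | @insert a A ha ih =>
    -- express cardinality as a sum of indicators
    have hcard_sum : ∀ (P : Finset (Fin n × Fin p) → Prop) [DecidablePred P],
        (Finset.univ.filter P).card
        = ∑ e : Finset (Fin n × Fin p), (if P e then 1 else 0) := by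
      intro P _
      rw [Finset.sum_boole]
      simp
    rw [hcard_sum]
    have hsplit : ∀ e : Finset (Fin n × Fin p),
        (if tvP e ∧ (∀ x ∈ e, x.1 ∈ insert a A) ∧ e.card = t then (1 : ℕ) else 0)
        = (if (tvP e ∧ (∀ x ∈ e, x.1 ∈ A) ∧ e.card = t) ∧ e.filter (fun x => x.1 = a) = ∅
            then 1 else 0)
          + ∑ b : Fin p, (if (tvP e ∧ (∀ x ∈ e, x.1 ∈ insert a A) ∧ e.card = t)
              ∧ e.filter (fun x => x.1 = a) = {(a, b)} then 1 else 0) := by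
      intro e
      rcases slice_cases a e with hsl | ⟨b0, hsl⟩ | ⟨hne0, hnsing, hntv⟩
      · have hz : ∀ b : Fin p, (if (tvP e ∧ (∀ x ∈ e, x.1 ∈ insert a A) ∧ e.card = t)
            ∧ e.filter (fun x => x.1 = a) = {(a, b)} then (1:ℕ) else 0) = 0 := by
          intro b
          rw [if_neg]
          rintro ⟨-, hEq⟩
          rw [hsl] at hEq
          exact (Finset.singleton_ne_empty _) hEq.symm
        rw [Finset.sum_congr rfl (fun b _ => hz b), Finset.sum_const_zero, Nat.add_zero]
        have hnota : ∀ x ∈ e, x.1 ≠ a := by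
          intro x hx hxa
          have : x ∈ e.filter (fun x => x.1 = a) := Finset.mem_filter.mpr ⟨hx, hxa⟩
          rw [hsl] at this; simp at this
        by_cases hc : tvP e ∧ (∀ x ∈ e, x.1 ∈ A) ∧ e.card = t
        · rw [if_pos ⟨hc.1, fun x hx => Finset.mem_insert_of_mem (hc.2.1 x hx), hc.2.2⟩,
            if_pos ⟨hc, hsl⟩]
        · rw [if_neg, if_neg (fun hco => hc hco.1)]
          rintro ⟨h1, h2, h3⟩
          apply hc
          refine ⟨h1, fun x hx => ?_, h3⟩
          rcases Finset.mem_insert.mp (h2 x hx) with hEq | hEq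
          · exact absurd hEq (hnota x hx)
          · exact hEq
      · have hmem : (a, b0) ∈ e := by
          have : (a, b0) ∈ e.filter (fun x => x.1 = a) := by rw [hsl]; simp
          exact (Finset.mem_filter.mp this).1
        have hnsl : e.filter (fun x => x.1 = a) ≠ ∅ := by
          rw [hsl]; exact Finset.singleton_ne_empty _
        rw [if_neg (fun hco : (tvP e ∧ (∀ x ∈ e, x.1 ∈ A) ∧ e.card = t)
          ∧ e.filter (fun x => x.1 = a) = ∅ => hnsl hco.2)]
        have hz : ∀ b : Fin p, (if (tvP e ∧ (∀ x ∈ e, x.1 ∈ insert a A) ∧ e.card = t)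
            ∧ e.filter (fun x => x.1 = a) = {(a, b)} then (1:ℕ) else 0)
            = if b = b0 then (if tvP e ∧ (∀ x ∈ e, x.1 ∈ insert a A) ∧ e.card = t
                then 1 else 0) else 0 := by
          intro b
          by_cases hb : b = b0
          · subst hb
            by_cases hc : tvP e ∧ (∀ x ∈ e, x.1 ∈ insert a A) ∧ e.card = t
            · rw [if_pos ⟨hc, hsl⟩, if_pos rfl, if_pos hc]
            · rw [if_neg (fun hco => hc hco.1), if_pos rfl, if_neg hc]
          · rw [if_neg, if_neg hb]
            rintro ⟨-, hEq⟩
            rw [hsl] at hEq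
            exact hb (congrArg Prod.snd (Finset.singleton_injective hEq)).symm
        rw [Finset.sum_congr rfl (fun b _ => hz b), Finset.sum_ite_eq' Finset.univ b0,
          if_pos (Finset.mem_univ b0), Nat.zero_add]
      · rw [if_neg (fun hco => hntv hco.1), if_neg (fun hco => hntv hco.1.1),
          Finset.sum_congr rfl (fun b _ => if_neg (fun hco => hnsing b hco.2)),
          Finset.sum_const_zero]
        omega
    rw [Finset.sum_congr rfl (fun e _ => hsplit e), Finset.sum_add_distrib]
    have hfirst : ∑ e : Finset (Fin n × Fin p),
        (if (tvP e ∧ (∀ x ∈ e, x.1 ∈ A) ∧ e.card = t) ∧ e.filter (fun x => x.1 = a) = ∅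
          then (1:ℕ) else 0) = A.card.choose t * p ^ t := by
      rw [← ih t, hcard_sum]
      apply Finset.sum_congr rfl
      intro e _
      by_cases hc : tvP e ∧ (∀ x ∈ e, x.1 ∈ A) ∧ e.card = t
      · rw [if_pos hc, if_pos]
        refine ⟨hc, ?_⟩
        rw [Finset.filter_eq_empty_iff]
        intro x hx hxa
        have := hc.2.1 x hx
        rw [hxa] at this
        exact ha this
      · rw [if_neg hc, if_neg (fun hco => hc hco.1)]
    rw [hfirst]
    have hsecond : ∑ e : Finset (Fin n × Fin p),
        (∑ b : Fin p, (if (tvP e ∧ (∀ x ∈ e, x.1 ∈ insert a A) ∧ e.card = t)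
          ∧ e.filter (fun x => x.1 = a) = {(a, b)} then (1:ℕ) else 0))
        = p * (A.card.choose (t - 1) * p ^ (t - 1)) * (if 1 ≤ t then 1 else 0) := by
      rw [Finset.sum_comm]
      have hb_sum : ∀ b : Fin p, ∑ e : Finset (Fin n × Fin p),
          (if (tvP e ∧ (∀ x ∈ e, x.1 ∈ insert a A) ∧ e.card = t)
            ∧ e.filter (fun x => x.1 = a) = {(a, b)} then (1:ℕ) else 0)
          = (A.card.choose (t - 1) * p ^ (t - 1)) * (if 1 ≤ t then 1 else 0) := by
        intro b
        have hrw : ∀ e' : Finset (Fin n × Fin p),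
            (if (tvP e' ∧ (∀ x ∈ e', x.1 ∈ insert a A) ∧ e'.card = t)
              ∧ e'.filter (fun x => x.1 = a) = {(a, b)} then (1:ℕ) else 0)
            = if e'.filter (fun x => x.1 = a) = {(a, b)}
                then (if tvP e' ∧ (∀ x ∈ e', x.1 ∈ insert a A) ∧ e'.card = t then 1 else 0)
                else 0 := by
          intro e'
          by_cases h1 : e'.filter (fun x => x.1 = a) = {(a, b)} <;>
            by_cases h2 : tvP e' ∧ (∀ x ∈ e', x.1 ∈ insert a A) ∧ e'.card = t <;>
            simp [h1, h2]
        rw [Finset.sum_congr rfl (fun e' _ => hrw e'), ← Finset.sum_filter,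
          sum_slice_insert a b
            (fun e' => if tvP e' ∧ (∀ x ∈ e', x.1 ∈ insert a A) ∧ e'.card = t then 1 else 0)]
        have hcong : ∀ e ∈ Finset.univ.filter
            (fun e : Finset (Fin n × Fin p) => e.filter (fun x => x.1 = a) = ∅),
            (if tvP (insert (a, b) e) ∧ (∀ x ∈ insert (a, b) e, x.1 ∈ insert a A)
                ∧ (insert (a, b) e).card = t then (1:ℕ) else 0)
            = if tvP e ∧ (∀ x ∈ e, x.1 ∈ A) ∧ e.card = t - 1 ∧ 1 ≤ t then 1 else 0 := by
          intro e he
          simp only [Finset.mem_filter, Finset.mem_univ, true_and] at he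
          have hnm : (a, b) ∉ e := by
            intro hmem
            have : (a, b) ∈ e.filter (fun x => x.1 = a) := Finset.mem_filter.mpr ⟨hmem, rfl⟩
            rw [he] at this; simp at this
          have hnota : ∀ x ∈ e, x.1 ≠ a := by
            intro x hx hxa
            have : x ∈ e.filter (fun x => x.1 = a) := Finset.mem_filter.mpr ⟨hx, hxa⟩
            rw [he] at this; simp at this
          have hcins : (insert (a, b) e).card = e.card + 1 := Finset.card_insert_of_notMem hnm
          congr 1
          rw [eq_iff_iff]
          constructor
          · rintro ⟨h1, h2, h3⟩
            refine ⟨(tv_insert a b e he).mp h1, fun x hx => ?_, by omega, by omega⟩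
            rcases Finset.mem_insert.mp (h2 x (Finset.mem_insert_of_mem hx)) with hEq | hEq
            · exact absurd hEq (hnota x hx)
            · exact hEq
          · rintro ⟨h1, h2, h3, h4⟩
            refine ⟨(tv_insert a b e he).mpr h1, fun x hx => ?_, by omega⟩
            rcases Finset.mem_insert.mp hx with rfl | hx
            · exact Finset.mem_insert_self _ _
            · exact Finset.mem_insert_of_mem (h2 x hx)
        rw [Finset.sum_congr rfl hcong]
        by_cases ht : 1 ≤ t
        · have : ∀ e : Finset (Fin n × Fin p),
              (if tvP e ∧ (∀ x ∈ e, x.1 ∈ A) ∧ e.card = t - 1 ∧ 1 ≤ t then (1:ℕ) else 0)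
              = if tvP e ∧ (∀ x ∈ e, x.1 ∈ A) ∧ e.card = t - 1 then 1 else 0 := by
            intro e
            by_cases hc : tvP e ∧ (∀ x ∈ e, x.1 ∈ A) ∧ e.card = t - 1
            · rw [if_pos ⟨hc.1, hc.2.1, hc.2.2, ht⟩, if_pos hc]
            · rw [if_neg, if_neg hc]
              rintro ⟨h1, h2, h3, -⟩
              exact hc ⟨h1, h2, h3⟩
          rw [Finset.sum_subset (Finset.filter_subset _ _) (by
            intro e _ hmem
            simp only [Finset.mem_filter, Finset.mem_univ, true_and] at hmem
            rw [if_neg]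
            rintro ⟨-, h2, -, -⟩
            obtain ⟨x, hx⟩ := Finset.nonempty_iff_ne_empty.mpr hmem
            have hx1 := Finset.mem_filter.mp hx
            have hxA := h2 x hx1.1
            rw [hx1.2] at hxA
            exact ha hxA), Finset.sum_congr rfl (fun e _ => this e), ← hcard_sum, ih (t-1),
            if_pos ht, Nat.mul_one]
        · rw [if_neg ht, Nat.mul_zero]
          apply Finset.sum_eq_zero
          intro e _
          rw [if_neg]
          rintro ⟨-, -, -, h4⟩
          exact ht h4
      rw [Finset.sum_congr rfl (fun b _ => hb_sum b), Finset.sum_const, smul_eq_mul,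
        Finset.card_univ, Fintype.card_fin]
      ring
    rw [hsecond, Finset.card_insert_of_notMem ha]
    rcases Nat.eq_zero_or_pos t with rfl | ht
    · simp
    · rw [if_pos (by omega : 1 ≤ t), Nat.mul_one]
      have hpascal : (A.card + 1).choose t = A.card.choose (t - 1) + A.card.choose t := by
        obtain ⟨t', rfl⟩ : ∃ t', t = t' + 1 := ⟨t - 1, by omega⟩
        simp only [Nat.add_sub_cancel]
        exact Nat.choose_succ_succ _ _
      rw [hpascal]
      have hpow : p * p ^ (t - 1) = p ^ t := by
        rw [← pow_succ', show t - 1 + 1 = t by omega]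
      calc A.card.choose t * p ^ t + p * (A.card.choose (t-1) * p ^ (t-1))
          = A.card.choose t * p ^ t + A.card.choose (t-1) * (p * p ^ (t-1)) := by ring
        _ = A.card.choose t * p ^ t + A.card.choose (t-1) * p ^ t := by rw [hpow]
        _ = (A.card.choose (t-1) + A.card.choose t) * p ^ t := by ring

end Endgame

section Final

lemma filter_card_sum {α : Type*} {k : ℕ} (G : Fin k → Multiset α) (P : α → Prop)
    [DecidablePred P] :
    (((∑ i, G i).filter P)).card = ∑ i, ((G i).filter P).card := by
  classical
  induction (Finset.univ : Finset (Fin k)) using Finset.cons_induction with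
  | empty => simp
  | cons a s ha ih =>
    rw [Finset.sum_cons, Finset.sum_cons, Multiset.filter_add, Multiset.card_add, ih]

lemma sum_filter_card_eq_map_card {n p : ℕ} (μ : Multiset (Finset (Fin n × Fin p))) :
    ∑ v : Fin n × Fin p, (μ.filter (fun e => v ∈ e)).card = (μ.map Finset.card).sum := by
  classical
  induction μ using Multiset.induction_on with
  | empty => simp
  | cons e μ ih =>
    rw [Multiset.map_cons, Multiset.sum_cons, ← ih]
    have hpt : ∀ v : Fin n × Fin p,
        (Multiset.filter (fun e' => v ∈ e') (e ::ₘ μ)).card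
        = (if v ∈ e then 1 else 0) + (Multiset.filter (fun e' => v ∈ e') μ).card := by
      intro v
      rw [Multiset.filter_cons]
      by_cases hv : v ∈ e
      · rw [if_pos hv, if_pos hv, Multiset.card_add]
        simp
      · rw [if_neg hv, if_neg hv]
        simp
    rw [Finset.sum_congr rfl (fun v _ => hpt v), Finset.sum_add_distrib, ← card_as_sum]

end Final

section Count2

lemma card_filter_eq_sum_ite {α : Type*} [Fintype α] (P : α → Prop) [DecidablePred P] :
    (Finset.univ.filter P).card = ∑ a, if P a then 1 else 0 := by
  rw [Finset.sum_boole]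
  simp

lemma count_containing (n h p : ℕ) (hh : 1 ≤ h) (a0 : Fin n) (b0 : Fin p) :
    (Finset.univ.filter
      (fun e : Finset (Fin n × Fin p) => tvP e ∧ e.card = h ∧ (a0, b0) ∈ e)).card
    = (n - 1).choose (h - 1) * p ^ (h - 1) := by
  classical
  rw [card_filter_eq_sum_ite]
  have hpt : ∀ e : Finset (Fin n × Fin p),
      (if tvP e ∧ e.card = h ∧ (a0, b0) ∈ e then (1:ℕ) else 0)
      = if e.filter (fun x => x.1 = a0) = {(a0, b0)}
          then (if tvP e ∧ e.card = h then 1 else 0) else 0 := by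
    intro e
    by_cases hsl : e.filter (fun x => x.1 = a0) = {(a0, b0)}
    · rw [if_pos hsl]
      have hmem : (a0, b0) ∈ e := by
        have : (a0, b0) ∈ e.filter (fun x => x.1 = a0) := by rw [hsl]; simp
        exact (Finset.mem_filter.mp this).1
      by_cases hc : tvP e ∧ e.card = h
      · rw [if_pos ⟨hc.1, hc.2, hmem⟩, if_pos hc]
      · rw [if_neg (fun hco => hc ⟨hco.1, hco.2.1⟩), if_neg hc]
    · rw [if_neg hsl, if_neg]
      rintro ⟨h1, h2, h3⟩
      apply hsl
      have hm : (a0, b0) ∈ e.filter (fun x => x.1 = a0) := Finset.mem_filter.mpr ⟨h3, rfl⟩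
      apply Finset.eq_singleton_iff_unique_mem.mpr
      refine ⟨hm, fun x hx => ?_⟩
      exact Finset.card_le_one.mp (h1 a0) x hx (a0, b0) hm
  rw [Finset.sum_congr rfl (fun e _ => hpt e)]
  rw [show (∑ e : Finset (Fin n × Fin p), if e.filter (fun x => x.1 = a0) = {(a0, b0)}
        then (if tvP e ∧ e.card = h then (1:ℕ) else 0) else 0)
      = ∑ e ∈ Finset.univ.filter
        (fun e : Finset (Fin n × Fin p) => e.filter (fun x => x.1 = a0) = {(a0, b0)}),
        (if tvP e ∧ e.card = h then (1:ℕ) else 0) from (Finset.sum_filter _ _).symm]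
  rw [sum_slice_insert a0 b0 (fun e => if tvP e ∧ e.card = h then 1 else 0)]
  have hcong : ∀ e ∈ Finset.univ.filter
      (fun e : Finset (Fin n × Fin p) => e.filter (fun x => x.1 = a0) = ∅),
      (if tvP (insert (a0, b0) e) ∧ (insert (a0, b0) e).card = h then (1:ℕ) else 0)
      = if tvP e ∧ (∀ x ∈ e, x.1 ∈ Finset.univ.erase a0) ∧ e.card = h - 1 then 1 else 0 := by
    intro e he
    simp only [Finset.mem_filter, Finset.mem_univ, true_and] at he
    have hnm : (a0, b0) ∉ e := by
      intro hmem
      have : (a0, b0) ∈ e.filter (fun x => x.1 = a0) := Finset.mem_filter.mpr ⟨hmem, rfl⟩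
      rw [he] at this; simp at this
    have hnota : ∀ x ∈ e, x.1 ≠ a0 := by
      intro x hx hxa
      have : x ∈ e.filter (fun x => x.1 = a0) := Finset.mem_filter.mpr ⟨hx, hxa⟩
      rw [he] at this; simp at this
    have hcins : (insert (a0, b0) e).card = e.card + 1 := Finset.card_insert_of_notMem hnm
    congr 1
    rw [eq_iff_iff]
    constructor
    · rintro ⟨h1, h2⟩
      refine ⟨(tv_insert a0 b0 e he).mp h1, fun x hx => ?_, by omega⟩
      exact Finset.mem_erase.mpr ⟨hnota x hx, Finset.mem_univ _⟩
    · rintro ⟨h1, h2, h3⟩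
      exact ⟨(tv_insert a0 b0 e he).mpr h1, by omega⟩
  rw [Finset.sum_congr rfl hcong, Finset.sum_filter]
  have hpt2 : ∀ e : Finset (Fin n × Fin p),
      (if e.filter (fun x => x.1 = a0) = ∅
        then (if tvP e ∧ (∀ x ∈ e, x.1 ∈ Finset.univ.erase a0) ∧ e.card = h - 1
          then (1:ℕ) else 0) else 0)
      = if tvP e ∧ (∀ x ∈ e, x.1 ∈ Finset.univ.erase a0) ∧ e.card = h - 1 then 1 else 0 := by
    intro e
    by_cases hsl : e.filter (fun x => x.1 = a0) = ∅
    · rw [if_pos hsl]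
    · rw [if_neg hsl, if_neg]
      rintro ⟨-, h2, -⟩
      apply hsl
      rw [Finset.filter_eq_empty_iff]
      intro x hx hxa
      have := Finset.mem_erase.mp (h2 x hx)
      exact this.1 hxa
  rw [Finset.sum_congr rfl (fun e _ => hpt2 e), ← card_filter_eq_sum_ite, count_transversal,
    Finset.card_erase_of_mem (Finset.mem_univ a0), Finset.card_univ, Fintype.card_fin]

end Count2

/-- Multipartite Baranyai theorem: the complete `h`-uniform `n`-partite hypergraph
`K^h_{n×p}` (parts of size `p`, edges all transversal `h`-subsets) is
`r`-factorizable iff `h ∣ n * p * r` and `r ∣ C(n-1, h-1) * p^(h-1)`. -/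
theorem baranyai_multipartite (n h p r : ℕ) (hh : 2 ≤ h) (hn : h ≤ n)
    (hp : 1 ≤ p) (hr : 1 ≤ r) :
    (∃ (k : ℕ) (F : Fin k → Multiset (Finset (Fin n × Fin p))),
        (∑ i, F i)
          = ((Finset.powersetCard h (Finset.univ : Finset (Fin n × Fin p))).filter
              (fun e => ∀ a : Fin n, (e.filter (fun x => x.1 = a)).card ≤ 1)).val ∧
        ∀ i (v : Fin n × Fin p), ((F i).filter (fun e => v ∈ e)).card = r)
    ↔ (h ∣ n * p * r ∧ r ∣ Nat.choose (n - 1) (h - 1) * p ^ (h - 1)) := by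
  classical
  set tgt := ((Finset.powersetCard h (Finset.univ : Finset (Fin n × Fin p))).filter
      (fun e => ∀ a : Fin n, (e.filter (fun x => x.1 = a)).card ≤ 1)) with htgt
  have htgt_mem : ∀ e : Finset (Fin n × Fin p), e ∈ tgt ↔ tvP e ∧ e.card = h := by
    intro e
    rw [htgt, Finset.mem_filter, Finset.mem_powersetCard]
    constructor
    · rintro ⟨⟨-, hc⟩, htv⟩; exact ⟨htv, hc⟩
    · rintro ⟨htv, hc⟩; exact ⟨⟨Finset.subset_univ e, hc⟩, htv⟩
  constructor
  · rintro ⟨k, F, hsum, hreg⟩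
    have a0 : Fin n := ⟨0, by omega⟩
    have b0 : Fin p := ⟨0, by omega⟩
    have hNv : (tgt.filter (fun e => (a0, b0) ∈ e)).card
        = (n - 1).choose (h - 1) * p ^ (h - 1) := by
      rw [← count_containing n h p (by omega) a0 b0]
      congr 1
      ext e
      simp only [Finset.mem_filter, Finset.mem_univ, true_and]
      rw [show (e ∈ tgt) = (tvP e ∧ e.card = h) from propext (htgt_mem e)]
      tauto
    have hkr : k * r = (n - 1).choose (h - 1) * p ^ (h - 1) := by
      have h1 : ∑ i, ((F i).filter (fun e => (a0, b0) ∈ e)).card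
          = ((∑ i, F i).filter (fun e => (a0, b0) ∈ e)).card :=
        (filter_card_sum F _).symm
      rw [Finset.sum_congr rfl (fun i _ => hreg i (a0, b0)), Finset.sum_const,
        Finset.card_univ, Fintype.card_fin, smul_eq_mul] at h1
      rw [h1, hsum, ← Finset.filter_val, ← Finset.card_def, hNv]
    have hpos : 0 < (n - 1).choose (h - 1) * p ^ (h - 1) := by
      apply Nat.mul_pos
      · exact Nat.choose_pos (by omega)
      · positivity
    have hkpos : 0 < k := by
      rcases Nat.eq_zero_or_pos k with rfl | hk
      · rw [Nat.zero_mul] at hkr; omega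
      · exact hk
    constructor
    · -- h ∣ n p r
      set i0 : Fin k := ⟨0, hkpos⟩
      have hmemF : ∀ e ∈ F i0, tvP e ∧ e.card = h := by
        intro e he
        have hle : F i0 ≤ ∑ i, F i :=
          Finset.single_le_sum (f := F) (fun _ _ => Multiset.zero_le _) (Finset.mem_univ i0)
        have := Multiset.mem_of_le hle he
        rw [hsum, Finset.mem_val] at this
        exact (htgt_mem e).mp this
      have hkey : ∑ v : Fin n × Fin p, ((F i0).filter (fun e => v ∈ e)).card
          = ((F i0).map Finset.card).sum := sum_filter_card_eq_map_card (F i0)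
      rw [Finset.sum_congr rfl (fun v _ => hreg i0 v), Finset.sum_const, Finset.card_univ,
        Fintype.card_prod, Fintype.card_fin, Fintype.card_fin, smul_eq_mul] at hkey
      have hmap : (F i0).map Finset.card = Multiset.replicate (Multiset.card (F i0)) h := by
        rw [Multiset.map_congr rfl (fun e he => (hmemF e he).2), Multiset.map_const']
      rw [hmap, Multiset.sum_replicate, smul_eq_mul] at hkey
      exact ⟨Multiset.card (F i0), by rw [hkey, Nat.mul_comm]⟩
    · exact ⟨k, by rw [← hkr, Nat.mul_comm]⟩
  · rintro ⟨⟨s, hs⟩, ⟨k, hk⟩⟩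
    obtain ⟨c, hcol, hrow, hdeg⟩ := exists_invariant n h p r s k hh hn hp hr hs hk n le_rfl
    have hM1 : ∀ e, Mw n h p n e = if tvP e ∧ e.card = h then 1 else 0 := Mw_final n h p
    have hc01 : ∀ j e, c j e ≤ 1 := by
      intro j e
      have h1 : c j e ≤ Mw n h p n e := by
        rw [← hcol e]
        exact Finset.single_le_sum (f := fun j => c j e) (fun _ _ => Nat.zero_le _)
          (Finset.mem_univ j)
      rw [hM1 e] at h1
      split at h1 <;> omega
    refine ⟨k, fun j => (Finset.univ.filter (fun e => c j e = 1)).val, ?_, ?_⟩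
    · apply Multiset.ext.mpr
      intro e
      rw [Multiset.count_sum']
      have hcnt : ∀ j : Fin k,
          Multiset.count e (Finset.univ.filter (fun e' => c j e' = 1)).val = c j e := by
        intro j
        rw [count_finset_val]
        simp only [Finset.mem_filter, Finset.mem_univ, true_and]
        have := hc01 j e
        by_cases hc : c j e = 1
        · rw [if_pos hc, hc]
        · rw [if_neg hc]; omega
      rw [Finset.sum_congr rfl (fun j _ => hcnt j), hcol e, hM1 e, count_finset_val]
      by_cases he : e ∈ tgt
      · rw [if_pos ((htgt_mem e).mp he), if_pos he]
      · rw [if_neg (fun hc => he ((htgt_mem e).mpr hc)), if_neg he]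
    · intro j v
      rw [← Finset.filter_val, ← Finset.card_def, Finset.filter_filter,
        card_filter_eq_sum_ite]
      have hpt : ∀ e : Finset (Fin n × Fin p),
          (if c j e = 1 ∧ v ∈ e then (1:ℕ) else 0) = if v ∈ e then c j e else 0 := by
        intro e
        have := hc01 j e
        by_cases hc : c j e = 1 <;> by_cases hv : v ∈ e <;> simp [hc, hv] <;> omega
      rw [Finset.sum_congr rfl (fun e _ => hpt e)]
      exact hdeg j v v.1.isLt
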